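/- arXiv:1704.01050 — 4 statements merged into one kernel-verified Lean document; each statement's English description precedes it below -/
import Mathlib

section
/- Let T = ⟨A_0, A_1(1), …, A_{i−1}(i−1)⟩ be a Lefschetz decomposition of length i ≥ 1 of a triangulated category T with respect to an exact autoequivalence τ, and let 1 ≤ k ≤ i. Then the sequence of subcategories α_0^*(𝔞_0(1)), α_0^*(𝔞_1(2)), …, α_0^*(𝔞_{k−1}(k)) is semiorthogonal, and there is an equality of generated subcategories ⟨α_0^*(𝔞_0(1)), …, α_0^*(𝔞_{k−1}(k)), A_1(1), …, A_k(k)⟩ = ⟨A_0(1), A_1(2), …, A_{k−1}(k)⟩ inside T. In particular, taking k = i, the sequence α_0^*(𝔞_0(1)), α_0^*(𝔞_1(2)), …, α_0^*(𝔞_{i−1}(i)) gives a semiorthogonal decomposition A_0 = ⟨α_0^*(𝔞_0(1)), α_0^*(𝔞_1(2)), …, α_0^*(𝔞_{i−1}(i))⟩. -/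
namespace HPD

open CategoryTheory Category Limits Pretriangulated

universe w v u

variable {C : Type u} [Category.{v} C]

/-- The "essential image" of a set of objects under an assignment `Φ` on objects. -/
def essImageSet (Φ : C → C) (S : Set C) : Set C :=
  {Y : C | ∃ X ∈ S, Nonempty (Φ X ≅ Y)}

/-- The image of a set of objects under a functor to a full subcategory, regarded as a
set of objects of the ambient category (closed under isomorphism). -/
def projImageSet {Z : C → Prop} (π : C ⥤ ObjectProperty.FullSubcategory Z) (S : Set C) : Set C :=
  essImageSet (fun X : C => (π.obj X).obj) S

section Preadd

variable [Preadditive C]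

/-- `HomOrth B A` : every morphism from an object of `B` to an object of `A` vanishes. -/
def HomOrth (B A : Set C) : Prop :=
  ∀ ⦃X : C⦄, X ∈ B → ∀ ⦃Y : C⦄, Y ∈ A → ∀ f : X ⟶ Y, f = 0

/-- The right orthogonal `A^⊥` of a set of objects `A`. -/
def rightOrth (A : Set C) : Set C :=
  {Y : C | ∀ ⦃X : C⦄, X ∈ A → ∀ f : X ⟶ Y, f = 0}

/-- The left orthogonal `^⊥A` of a set of objects `A`. -/
def leftOrth (A : Set C) : Set C :=
  {X : C | ∀ ⦃Y : C⦄, Y ∈ A → ∀ f : X ⟶ Y, f = 0}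

/-- A subcategory (set of objects) is admissible if the inclusion of the corresponding
full subcategory admits both a left and a right adjoint. -/
def IsAdmissibleSub (A : Set C) : Prop :=
  (ObjectProperty.ι (· ∈ A)).IsRightAdjoint ∧
    (ObjectProperty.ι (· ∈ A)).IsLeftAdjoint

/-- `L : C ⥤ C` is a left mutation functor through `B`, i.e. it is (isomorphic to)
the composition `i_{B^⊥} ∘ i_{B^⊥}^*` of the left adjoint of the inclusion of the right
orthogonal of `B` with this inclusion. -/
def IsLeftMutation (B : Set C) (L : C ⥤ C) : Prop :=
  ∃ p : C ⥤ ObjectProperty.FullSubcategory (· ∈ rightOrth B),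
    Nonempty (p ⊣ ObjectProperty.ι (· ∈ rightOrth B)) ∧
      Nonempty (L ≅ p ⋙ ObjectProperty.ι (· ∈ rightOrth B))

end Preadd

section Triang

variable [HasZeroObject C] [Preadditive C] [HasShift C ℤ]
  [∀ n : ℤ, (shiftFunctor C n).Additive] [Pretriangulated C]

/-- A full triangulated subcategory, recorded as its (isomorphism-closed) set of objects. -/
structure IsTriangSub (A : Set C) : Prop where
  zero_mem : ∀ ⦃Z : C⦄, IsZero Z → Z ∈ A
  iso_mem : ∀ ⦃X Y : C⦄, (X ≅ Y) → X ∈ A → Y ∈ A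
  shift_mem : ∀ ⦃X : C⦄ (n : ℤ), X ∈ A → (X⟦n⟧ : C) ∈ A
  cone_mem : ∀ T : Triangle C, (T ∈ distTriang C) → T.obj₁ ∈ A → T.obj₂ ∈ A → T.obj₃ ∈ A

/-- A full triangulated subcategory is admissible if it moreover has the two adjoints. -/
def IsAdmissible (A : Set C) : Prop :=
  IsTriangSub A ∧ IsAdmissibleSub A

/-- The smallest full triangulated subcategory containing a given set of objects. -/
def generated (S : Set C) : Set C :=
  ⋂₀ {P : Set C | IsTriangSub P ∧ S ⊆ P}

/-- A semiorthogonal sequence of subcategories: no nonzero morphisms from later to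
earlier ones. -/
def Semiorthogonal {n : ℕ} (A : Fin n → Set C) : Prop :=
  ∀ ⦃l k : Fin n⦄, l < k → HomOrth (A k) (A l)

/-- `t` admits a filtration `0 = t_n → t_{n-1} → ⋯ → t_0 = t` whose successive cones lie
in the prescribed subcategories. -/
def HasFiltration {n : ℕ} (A : Fin n → Set C) (t : C) : Prop :=
  ∃ (F : Fin (n + 1) → C) (f : ∀ j : Fin n, F j.succ ⟶ F j.castSucc),
    IsZero (F (Fin.last n)) ∧ F 0 = t ∧
      ∀ j : Fin n, ∃ (a : C) (g : F j.castSucc ⟶ a) (h : a ⟶ (F j.succ)⟦(1 : ℤ)⟧),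
        (Triangle.mk (f j) g h ∈ distTriang C) ∧ a ∈ A j

/-- A semiorthogonal decomposition of (the bounded derived category) `C`. -/
structure IsSOD {n : ℕ} (A : Fin n → Set C) : Prop where
  triangSub : ∀ j, IsTriangSub (A j)
  semiorth : Semiorthogonal A
  filt : ∀ t : C, HasFiltration A t

/-- A semiorthogonal decomposition of a full triangulated subcategory `D` of `C`. -/
structure IsSODWithin (D : Set C) {n : ℕ} (A : Fin n → Set C) : Prop where
  subset : ∀ j, A j ⊆ D
  triangSub : ∀ j, IsTriangSub (A j)
  semiorth : Semiorthogonal A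
  filt : ∀ t ∈ D, HasFiltration A t

/-- The `n`-th power of an autoequivalence, applied to an object. -/
def twistFun (τ : C ≌ C) : ℤ → C → C
  | Int.ofNat m => (fun X : C => τ.functor.obj X)^[m]
  | Int.negSucc m => (fun X : C => τ.inverse.obj X)^[m + 1]

/-- The twist `S(n) = τⁿ(S)` of a set of objects (as an essential image). -/
def twistSet (τ : C ≌ C) (n : ℤ) (S : Set C) : Set C :=
  essImageSet (twistFun τ n) S

/-- A Lefschetz decomposition of `C` of length `i` with respect to the autoequivalence `τ`:
`C = ⟨A 0, (A 1)(1), …, (A (i-1))(i-1)⟩` with `A 0 ⊇ A 1 ⊇ ⋯ ⊇ A (i-1)` admissible. -/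
structure IsLefschetz (τ : C ≌ C) (i : ℕ) (A : ℕ → Set C) : Prop where
  pos : 0 < i
  desc : ∀ m : ℕ, m + 1 < i → A (m + 1) ⊆ A m
  adm : ∀ m : ℕ, m < i → IsAdmissible (A m)
  sod : IsSOD (fun j : Fin i => twistSet τ ((j : ℕ) : ℤ) (A (j : ℕ)))

/-- The primitive component `𝔞_k`, the right orthogonal of `A (k+1)` inside `A k`. -/
def primComp (A : ℕ → Set C) (m : ℕ) : Set C :=
  A m ∩ rightOrth (A (m + 1))

/-- Composition of a finite family of endofunctors: `compFam L = L 0 ∘ L 1 ∘ ⋯ ∘ L (m-1)`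
(so `L (m-1)` is applied first). -/
def compFam : ∀ {m : ℕ}, (Fin m → (C ⥤ C)) → (C ⥤ C)
  | 0, _ => 𝟭 C
  | _ + 1, L => compFam (fun j => L j.succ) ⋙ L 0

end Triang

section Serre

/-- A Serre functor on the `k`-linear triangulated category `C`: a `k`-linear exact
autoequivalence `S` together with pairings exhibiting `Hom(X, Y) ≅ Hom(Y, S X)^*`
naturally in both variables. -/
structure SerreData (k : Type w) [Field k] (C : Type u) [Category.{v} C] [Preadditive C]
    [CategoryTheory.Linear k C] [HasZeroObject C] [HasShift C ℤ]
    [∀ n : ℤ, (shiftFunctor C n).Additive] [Pretriangulated C] where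
  S : C ≌ C
  additive : S.functor.Additive
  linear : letI := additive; S.functor.Linear k
  commShift : S.functor.CommShift ℤ
  triangulated : letI := commShift; S.functor.IsTriangulated
  pairing : ∀ X Y : C, (X ⟶ Y) →ₗ[k] Module.Dual k (Y ⟶ S.functor.obj X)
  pairing_bijective : ∀ X Y : C, Function.Bijective (pairing X Y)
  pairing_nat_left : ∀ ⦃X' X Y : C⦄ (a : X' ⟶ X) (φ : X ⟶ Y) (ψ : Y ⟶ S.functor.obj X'),
    pairing X' Y (a ≫ φ) ψ = pairing X Y φ (ψ ≫ S.functor.map a)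
  pairing_nat_right : ∀ ⦃X Y Y' : C⦄ (b : Y ⟶ Y') (φ : X ⟶ Y) (ψ : Y' ⟶ S.functor.obj X),
    pairing X Y' (φ ≫ b) ψ = pairing X Y φ (b ≫ ψ)

end Serre



set_option linter.unusedSectionVars false
set_option linter.unusedVariables false

section Machinery

open ZeroObject Preadditive

variable [HasZeroObject C] [Preadditive C] [HasShift C ℤ]
  [∀ n : ℤ, (shiftFunctor C n).Additive] [Pretriangulated C]

lemma conj_zero {X X' Y Y' : C} (e₁ : X' ≅ X) (e₂ : Y ≅ Y')
    (h : ∀ g : X ⟶ Y, g = 0) (f : X' ⟶ Y') : f = 0 := by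
  have h0 : e₁.inv ≫ f ≫ e₂.inv = 0 := h _
  calc f = e₁.hom ≫ (e₁.inv ≫ f ≫ e₂.inv) ≫ e₂.hom := by simp
  _ = 0 := by rw [h0]; simp

lemma hom_into_shift_zero {X Y : C} {b : ℤ} (h : ∀ g : X⟦-b⟧ ⟶ Y, g = 0)
    (f : X ⟶ Y⟦b⟧) : f = 0 := by
  have h1 : (shiftFunctor C (-b)).map f = 0 := by
    refine conj_zero (Iso.refl _) ((shiftFunctorCompIsoId C b (-b) (add_neg_cancel b)).app Y).symm
      (fun g => ?_) _
    exact h g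
  apply (shiftFunctor C (-b)).map_injective
  rw [h1, Functor.map_zero]

lemma hom_from_shift_zero {X Y : C} {a : ℤ} (h : ∀ g : X ⟶ Y⟦-a⟧, g = 0)
    (f : X⟦a⟧ ⟶ Y) : f = 0 := by
  have h1 : (shiftFunctor C (-a)).map f = 0 := by
    refine conj_zero ((shiftFunctorCompIsoId C a (-a) (add_neg_cancel a)).app X) (Iso.refl _)
      (fun g => ?_) _
    exact h g
  apply (shiftFunctor C (-a)).map_injective
  rw [h1, Functor.map_zero]

lemma hom_shift_shift_zero {X Z : C} {n m : ℤ} (h : ∀ g : X⟦n + -m⟧ ⟶ Z, g = 0)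
    (f : X⟦n⟧ ⟶ Z⟦m⟧) : f = 0 := by
  refine hom_into_shift_zero (fun g => ?_) f
  exact conj_zero ((shiftFunctorAdd' C n (-m) (n + -m) rfl).app X).symm (Iso.refl _) h g

lemma unshift_zero {X Y : C} (h : ∀ (n : ℤ) (g : X⟦n⟧ ⟶ Y), g = 0) (f : X ⟶ Y) : f = 0 :=
  conj_zero ((shiftFunctorZero C ℤ).app X).symm (Iso.refl _) (h 0) f

/-- generated is a triangulated subcategory -/
lemma isTriangSub_generated (S : Set C) : IsTriangSub (generated S) := by
  constructor
  · intro Z hZ P hP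
    exact hP.1.zero_mem hZ
  · intro X Y e hX P hP
    exact hP.1.iso_mem e (hX P hP)
  · intro X n hX P hP
    exact hP.1.shift_mem n (hX P hP)
  · intro T hT h1 h2 P hP
    exact hP.1.cone_mem T hT (h1 P hP) (h2 P hP)

lemma subset_generated (S : Set C) : S ⊆ generated S :=
  fun x hx P hP => hP.2 hx

lemma generated_min {S P : Set C} (hP : IsTriangSub P) (hSP : S ⊆ P) :
    generated S ⊆ P := fun x hx => hx P ⟨hP, hSP⟩

lemma vanish_into_generated {X : C} {S : Set C}
    (h : ∀ g ∈ S, ∀ (n : ℤ) (f : X⟦n⟧ ⟶ g), f = 0) :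
    ∀ Z ∈ generated S, ∀ (n : ℤ) (f : X⟦n⟧ ⟶ Z), f = 0 := by
  have hP : IsTriangSub {Z : C | ∀ (n : ℤ) (f : X⟦n⟧ ⟶ Z), f = 0} := by
    constructor
    · intro Z hZ n f
      exact hZ.eq_of_tgt f 0
    · intro Z Z' e hZ n f
      exact conj_zero (Iso.refl _) e (hZ n) f
    · intro Z m hZ n f
      exact hom_shift_shift_zero (hZ (n + -m)) f
    · intro T hT h1 h2 n f
      have h3 : f ≫ T.mor₃ = 0 := hom_shift_shift_zero (h1 (n + -1)) (f ≫ T.mor₃)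
      obtain ⟨g, hg⟩ := Triangle.coyoneda_exact₃ T hT f h3
      rw [hg, h2 n g, zero_comp]
  intro Z hZ
  exact hZ _ ⟨hP, fun g hg n f => h g hg n f⟩

lemma vanish_from_generated {X : C} {S : Set C}
    (h : ∀ g ∈ S, ∀ (n : ℤ) (f : g ⟶ X⟦n⟧), f = 0) :
    ∀ Z ∈ generated S, ∀ (n : ℤ) (f : Z ⟶ X⟦n⟧), f = 0 := by
  have hP : IsTriangSub {Z : C | ∀ (n : ℤ) (f : Z ⟶ X⟦n⟧), f = 0} := by
    constructor
    · intro Z hZ n f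
      exact hZ.eq_of_src f 0
    · intro Z Z' e hZ n f
      exact conj_zero e.symm (Iso.refl _) (hZ n) f
    · intro Z m hZ n f
      refine hom_from_shift_zero (fun g => ?_) f
      exact conj_zero (Iso.refl _) ((shiftFunctorAdd' C n (-m) (n + -m) rfl).app X)
        (hZ (n + -m)) g
    · intro T hT h1 h2 n f
      have h3 : T.mor₂ ≫ f = 0 := h2 n _
      obtain ⟨g, hg⟩ := Triangle.yoneda_exact₃ T hT f h3
      have hg0 : g = 0 := by
        refine hom_from_shift_zero (fun g' => ?_) g
        exact conj_zero (Iso.refl _) ((shiftFunctorAdd' C n (-1) (n + -1) rfl).app X)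
          (h1 (n + -1)) g'
      rw [hg, hg0, comp_zero]
  intro Z hZ
  exact hZ _ ⟨hP, fun g hg n f => h g hg n f⟩

/-! ### ℕ-indexed filtrations -/

def NatFilt (A : ℕ → Set C) (n : ℕ) (t : C) : Prop :=
  ∃ (F : ℕ → C) (f : ∀ j : ℕ, F (j + 1) ⟶ F j), IsZero (F n) ∧ F 0 = t ∧
    ∀ j < n, ∃ (a : C) (g : F j ⟶ a) (h : a ⟶ (F (j + 1))⟦(1 : ℤ)⟧),
      (Triangle.mk (f j) g h ∈ distTriang C) ∧ a ∈ A j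

lemma natFilt_mono {A A' : ℕ → Set C} {n : ℕ} {t : C} (h : ∀ j < n, A j ⊆ A' j) :
    NatFilt A n t → NatFilt A' n t := by
  rintro ⟨F, f, hz, h0, htri⟩
  exact ⟨F, f, hz, h0, fun j hj => by
    obtain ⟨a, g, hh, hd, ha⟩ := htri j hj
    exact ⟨a, g, hh, hd, h j hj ha⟩⟩

lemma natFilt_congr {A A' : ℕ → Set C} {n : ℕ} {t : C} (h : ∀ j < n, A j = A' j) :
    NatFilt A n t → NatFilt A' n t :=
  natFilt_mono (fun j hj => (h j hj).le)

lemma natFilt_of_isZero {A : ℕ → Set C} {t : C} (h : IsZero t) : NatFilt A 0 t :=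
  ⟨fun _ => t, fun _ => 𝟙 t, h, rfl, fun j hj => by omega⟩

lemma natFilt_iso {A : ℕ → Set C} {n : ℕ} {t t' : C} (e : t ≅ t') :
    NatFilt A n t → NatFilt A n t' := by
  rintro ⟨F, f, hz, h0, htri⟩
  subst h0
  refine ⟨fun j => Nat.casesOn j t' (fun j' => F (j' + 1)),
    fun j => Nat.casesOn j (f 0 ≫ e.hom) (fun j' => f (j' + 1)), ?_, rfl, ?_⟩
  · cases n with
    | zero => exact hz.of_iso e.symm
    | succ m => exact hz
  · intro j hj
    obtain ⟨a, g, hh, hd, ha⟩ := htri j hj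
    cases j with
    | zero =>
      refine ⟨a, e.inv ≫ g, hh, ?_, ha⟩
      refine isomorphic_distinguished _ hd _ ?_
      exact Triangle.isoMk _ _ (Iso.refl _) e.symm (Iso.refl _) (by simp [Triangle.mk]) (by simp [Triangle.mk]) (by simp [Triangle.mk])
    | succ j' => exact ⟨a, g, hh, hd, ha⟩

lemma natFilt_peel {A : ℕ → Set C} {n : ℕ} {t : C} :
    NatFilt A (n + 1) t → ∃ (t' a : C) (w : t' ⟶ t) (g : t ⟶ a) (h : a ⟶ t'⟦(1 : ℤ)⟧),
      (Triangle.mk w g h ∈ distTriang C) ∧ a ∈ A 0 ∧ NatFilt (fun j => A (j + 1)) n t' := by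
  rintro ⟨F, f, hz, h0, htri⟩
  subst h0
  obtain ⟨a, g, hh, hd, ha⟩ := htri 0 (by omega)
  refine ⟨F 1, a, f 0, g, hh, hd, ha, F ∘ (· + 1), fun j => f (j + 1), hz, rfl, ?_⟩
  intro j hj
  obtain ⟨a', g', hh', hd', ha'⟩ := htri (j + 1) (by omega)
  exact ⟨a', g', hh', hd', ha'⟩

lemma natFilt_cons {A : ℕ → Set C} {n : ℕ} {t t' a : C} {w : t' ⟶ t} {g : t ⟶ a}
    {h : a ⟶ t'⟦(1 : ℤ)⟧} (hd : Triangle.mk w g h ∈ distTriang C) (ha : a ∈ A 0)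
    (hf : NatFilt (fun j => A (j + 1)) n t') : NatFilt A (n + 1) t := by
  obtain ⟨F, f, hz, h0, htri⟩ := hf
  subst h0
  refine ⟨fun j => Nat.casesOn j t (fun j' => F j'),
    fun j => Nat.casesOn j w (fun j' => f j'), hz, rfl, ?_⟩
  intro j hj
  cases j with
  | zero => exact ⟨a, g, h, hd, ha⟩
  | succ j' =>
    obtain ⟨a', g', hh', hd', ha'⟩ := htri j' (by omega)
    exact ⟨a', g', hh', hd', ha'⟩

lemma natFilt_mem {A : ℕ → Set C} {n : ℕ} {t : C} {P : Set C} (hP : IsTriangSub P)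
    (hA : ∀ j < n, A j ⊆ P) (hf : NatFilt A n t) : t ∈ P := by
  induction n generalizing A t with
  | zero =>
    obtain ⟨F, f, hz, h0, htri⟩ := hf
    subst h0
    exact hP.zero_mem hz
  | succ m ih =>
    obtain ⟨t', a, w, g, h, hd, ha, hf'⟩ := natFilt_peel hf
    have ht' : t' ∈ P := ih (fun j hj => hA (j + 1) (by omega)) hf'
    have := hP.cone_mem _ (inv_rot_of_distTriang _ hd)
      (hP.shift_mem (-1) (hA 0 (by omega) ha)) ht'
    exact this

lemma natFilt_mem_generated {A : ℕ → Set C} {n : ℕ} {t : C}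
    (hf : NatFilt A n t) : t ∈ generated (⋃ j ∈ Set.Iio n, A j) := by
  refine natFilt_mem (isTriangSub_generated _) (fun j hj x hx => ?_) hf
  exact subset_generated _ (Set.mem_biUnion hj hx)

lemma natFilt_truncate {p : ℕ} : ∀ {A : ℕ → Set C} {n : ℕ} {t : C},
    (∀ j < n, IsTriangSub (A j)) →
    (∀ l k : ℕ, l < k → k < n → HomOrth (A k) (A l)) →
    NatFilt A n t → p ≤ n →
    (∀ j, p ≤ j → j < n → ∀ c ∈ A j, ∀ f : c ⟶ t, f = 0) → NatFilt A p t := by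
  induction p with
  | zero =>
    intro A n t hA hsemi hf hp horth
    refine natFilt_of_isZero ?_
    have hmem := natFilt_mem_generated hf
    have hvan : ∀ Z ∈ generated (⋃ j ∈ Set.Iio n, A j), ∀ (m : ℤ) (f : Z ⟶ t⟦m⟧), f = 0 := by
      refine vanish_from_generated (fun g hg m f => ?_)
      obtain ⟨j, hj, hgj⟩ := by simpa using hg
      refine hom_into_shift_zero (fun g' => ?_) f
      exact horth j (by omega) hj _ ((hA j hj).shift_mem _ hgj) g'
    rw [Limits.IsZero.iff_id_eq_zero]
    have h0 : (shiftFunctorZero C ℤ).inv.app t = 0 := hvan t hmem 0 _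
    calc 𝟙 t = (shiftFunctorZero C ℤ).inv.app t ≫ (shiftFunctorZero C ℤ).hom.app t := by simp
    _ = 0 := by rw [h0, zero_comp]
  | succ q ih =>
    intro A n t hA hsemi hf hp horth
    cases n with
    | zero => omega
    | succ m =>
      obtain ⟨t', a, w, g, h, hd, ha, hf'⟩ := natFilt_peel hf
      have horth' : ∀ j, q ≤ j → j < m → ∀ c ∈ A (j + 1), ∀ f : c ⟶ t', f = 0 := by
        intro j hqj hjm c hc f
        have hfw : f ≫ w = 0 := horth (j + 1) (by omega) (by omega) c hc _
        obtain ⟨g', hg'⟩ := Triangle.coyoneda_exact₂ _ (inv_rot_of_distTriang _ hd) f hfw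
        have hg'0 : g' = 0 := by
          refine hom_into_shift_zero (fun g'' => ?_) g'
          exact hsemi 0 (j + 1) (by omega) (by omega)
            ((hA (j + 1) (by omega)).shift_mem _ hc) ha g''
        rw [hg', hg'0, zero_comp]
        rfl
      have hf'' := ih (fun j hj => hA (j + 1) (by omega))
        (fun l k hlk hk => hsemi (l + 1) (k + 1) (by omega) (by omega))
        hf' (by omega) horth'
      exact natFilt_cons hd ha hf''

lemma hasFiltration_of_natFilt {n : ℕ} {A : Fin n → Set C} {Aℕ : ℕ → Set C} {t : C}
    (hc : ∀ j : Fin n, Aℕ j.val ⊆ A j) (hf : NatFilt Aℕ n t) : HasFiltration A t := by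
  obtain ⟨F, f, hz, h0, htri⟩ := hf
  refine ⟨fun j => F j.val, fun j => f j.val, ?_, ?_, ?_⟩
  · simpa using hz
  · simpa using h0
  · intro j
    obtain ⟨a, g, hh, hd, ha⟩ := htri j.val j.isLt
    exact ⟨a, g, hh, hd, hc j ha⟩

lemma natFilt_of_hasFiltration {n : ℕ} {A : Fin n → Set C} {Aℕ : ℕ → Set C} {t : C}
    (hc : ∀ j : Fin n, A j ⊆ Aℕ j.val) (hf : HasFiltration A t) : NatFilt Aℕ n t := by
  obtain ⟨F, f, hz, h0, htri⟩ := hf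
  have hmin : ∀ j : ℕ, min j n < n + 1 := fun j => by omega
  refine ⟨fun j => F ⟨min j n, hmin j⟩, ?_, ?_, ?_, ?_⟩
  · intro j
    by_cases hj : j < n
    · exact eqToHom (congrArg F (Fin.ext (by simp; omega))) ≫ f ⟨j, hj⟩ ≫
        eqToHom (congrArg F (Fin.ext (by simp; omega)))
    · exact eqToHom (congrArg F (Fin.ext (by simp; omega)))
  · have : F ⟨min n n, hmin n⟩ = F (Fin.last n) := congrArg F (Fin.ext (by simp))
    show IsZero (F ⟨min n n, hmin n⟩)
    rw [this]; exact hz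
  · have : F ⟨min 0 n, hmin 0⟩ = F 0 := congrArg F (Fin.ext (by simp))
    show F ⟨min 0 n, hmin 0⟩ = t
    rw [this]; exact h0
  · intro j hj
    obtain ⟨a, g, hh, hd, ha⟩ := htri ⟨j, hj⟩
    have e2 : F ⟨min j n, hmin j⟩ = F (Fin.castSucc ⟨j, hj⟩) := congrArg F (Fin.ext (by simp; omega))
    have e1 : F ⟨min (j + 1) n, hmin (j + 1)⟩ = F (Fin.succ ⟨j, hj⟩) :=
      congrArg F (Fin.ext (by simp; omega))
    refine ⟨a, eqToHom e2 ≫ g, hh ≫ eqToHom (congrArg (fun Z => Z⟦(1 : ℤ)⟧) e1.symm), ?_, hc _ ha⟩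
    have hd' := isomorphic_distinguished _ hd
      (Triangle.mk (dite (j < n) (fun hj' => eqToHom (congrArg F (Fin.ext (by simp; omega))) ≫
          f ⟨j, hj'⟩ ≫ eqToHom (congrArg F (Fin.ext (by simp; omega)))) (fun hj' =>
          eqToHom (congrArg F (Fin.ext (by simp; omega)))))
        (eqToHom e2 ≫ g) (hh ≫ eqToHom (congrArg (fun Z => Z⟦(1 : ℤ)⟧) e1.symm)))
    refine hd' ?_
    refine Triangle.isoMk _ _ (eqToIso e1) (eqToIso e2) (Iso.refl a) ?_ ?_ ?_
    · simp [Triangle.mk, dif_pos hj, eqToHom_trans]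
    · simp [Triangle.mk]
    · simp [Triangle.mk, eqToHom_map]

/-! ### Iterated twist machinery -/

section Twist

variable (τ : C ≌ C) [τ.functor.CommShift ℤ] [τ.functor.IsTriangulated]

/-- Iterated application of `τ` on objects. -/
def itOb (m : ℕ) (X : C) : C := (fun Y : C => τ.functor.obj Y)^[m] X

lemma itOb_succ' (m : ℕ) (X : C) : itOb τ (m + 1) X = τ.functor.obj (itOb τ m X) :=
  Function.iterate_succ_apply' _ _ _

lemma itOb_add (a b : ℕ) (X : C) : itOb τ (a + b) X = itOb τ a (itOb τ b X) :=
  Function.iterate_add_apply _ _ _ _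

variable {τ}

lemma twistFun_natCast (m : ℕ) (X : C) : twistFun τ (m : ℤ) X = itOb τ m X := rfl

lemma mem_twistSet_natCast {m : ℕ} {S : Set C} {x : C} :
    x ∈ twistSet τ (m : ℤ) S ↔ ∃ X₀ ∈ S, Nonempty (itOb τ m X₀ ≅ x) := Iff.rfl

lemma mem_twistSet_natCast_add_one {m : ℕ} {S : Set C} {x : C} :
    x ∈ twistSet τ ((m : ℤ) + 1) S ↔ ∃ X₀ ∈ S, Nonempty (itOb τ (m + 1) X₀ ≅ x) := by
  have h : ((m : ℤ) + 1) = ((m + 1 : ℕ) : ℤ) := by push_cast; ring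
  rw [h]
  exact Iff.rfl

/-- Iterated functorial image of an isomorphism. -/
def itIso (m : ℕ) {X Y : C} (e : X ≅ Y) : itOb τ m X ≅ itOb τ m Y := by
  induction m with
  | zero => exact e
  | succ m ih => rw [itOb_succ', itOb_succ']; exact τ.functor.mapIso ih

/-- Iterated commutation with shift. -/
def itShiftIso (m : ℕ) (n : ℤ) (X : C) : (itOb τ m X)⟦n⟧ ≅ itOb τ m (X⟦n⟧) := by
  induction m with
  | zero => exact Iso.refl _
  | succ m ih =>
    rw [itOb_succ', itOb_succ']
    exact ((τ.functor.commShiftIso n).app (itOb τ m X)).symm ≪≫ τ.functor.mapIso ih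

lemma itOb_isZero {m : ℕ} {X : C} (h : IsZero X) : IsZero (itOb τ m X) := by
  induction m with
  | zero => exact h
  | succ m ih => rw [itOb_succ']; exact Functor.map_isZero _ ih

lemma untwist_zero (m : ℕ) {X Y : C} (h : ∀ g : X ⟶ Y, g = 0) :
    ∀ f : itOb τ m X ⟶ itOb τ m Y, f = 0 := by
  induction m with
  | zero => exact h
  | succ m ih =>
    rw [itOb_succ', itOb_succ']
    intro f
    obtain ⟨g, rfl⟩ := τ.functor.map_surjective f
    rw [ih g, Functor.map_zero]

lemma hom_zero_twist {a b : ℕ} (hba : b ≤ a) {X Y x y : C}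
    (hx : Nonempty (itOb τ a X ≅ x)) (hy : Nonempty (itOb τ b Y ≅ y))
    (h : ∀ g : itOb τ (a - b) X ⟶ Y, g = 0) : ∀ f : x ⟶ y, f = 0 := by
  obtain ⟨ex⟩ := hx
  obtain ⟨ey⟩ := hy
  intro f
  refine conj_zero ex.symm ey ?_ f
  have ha : itOb τ a X = itOb τ b (itOb τ (a - b) X) := by
    rw [← itOb_add]
    congr 1
    omega
  rw [ha]
  exact untwist_zero b h

lemma twistTS_one {S : Set C} (hS : IsTriangSub S) :
    IsTriangSub (essImageSet (fun Y : C => τ.functor.obj Y) S) := by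
  constructor
  · intro Z hZ
    refine ⟨0, hS.zero_mem (isZero_zero C), ⟨?_⟩⟩
    exact (Functor.map_isZero _ (isZero_zero C)).isoZero.trans hZ.isoZero.symm
  · rintro X Y e ⟨X₀, hX₀, ⟨e'⟩⟩
    exact ⟨X₀, hX₀, ⟨e'.trans e⟩⟩
  · rintro X n ⟨X₀, hX₀, ⟨e⟩⟩
    refine ⟨X₀⟦n⟧, hS.shift_mem n hX₀, ⟨?_⟩⟩
    exact ((τ.functor.commShiftIso n).app X₀).trans ((shiftFunctor C n).mapIso e)
  · rintro T hT ⟨X₁, hX₁, ⟨e₁⟩⟩ ⟨X₂, hX₂, ⟨e₂⟩⟩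
    have hg := τ.functor.map_surjective (e₁.hom ≫ T.mor₁ ≫ e₂.inv)
    obtain ⟨g, hg⟩ := hg
    obtain ⟨X₃, u, v, hT₃⟩ := distinguished_cocone_triangle g
    have hmap := τ.functor.map_distinguished _ hT₃
    have comm : (τ.functor.mapTriangle.obj (Triangle.mk g u v)).mor₁ ≫ e₂.hom =
        e₁.hom ≫ T.mor₁ := by
      dsimp
      change τ.functor.map g ≫ e₂.hom = _
      rw [hg]
      simp
    obtain e := isoTriangleOfIso₁₂ _ _ hmap hT e₁ e₂ comm
    refine ⟨X₃, hS.cone_mem _ hT₃ hX₁ hX₂, ⟨Triangle.π₃.mapIso e⟩⟩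

lemma essImageSet_comp_itOb (m : ℕ) (S : Set C) :
    essImageSet (fun Y : C => τ.functor.obj Y) (essImageSet (fun X : C => itOb τ m X) S) =
      essImageSet (fun X : C => itOb τ (m + 1) X) S := by
  ext x
  constructor
  · rintro ⟨y, ⟨X₀, hX₀, ⟨e₀⟩⟩, ⟨e⟩⟩
    refine ⟨X₀, hX₀, ⟨?_⟩⟩
    show itOb τ (m + 1) X₀ ≅ x
    rw [itOb_succ']
    exact (τ.functor.mapIso e₀).trans e
  · rintro ⟨X₀, hX₀, ⟨e⟩⟩
    refine ⟨itOb τ m X₀, ⟨X₀, hX₀, ⟨Iso.refl _⟩⟩, ⟨?_⟩⟩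
    change itOb τ (m + 1) X₀ ≅ x at e
    rw [itOb_succ'] at e
    exact e

lemma twistTS (m : ℕ) {S : Set C} (hS : IsTriangSub S) :
    IsTriangSub (essImageSet (fun X : C => itOb τ m X) S) := by
  induction m with
  | zero =>
    have : essImageSet (fun X : C => itOb τ 0 X) S = S := by
      ext x
      constructor
      · rintro ⟨X₀, hX₀, ⟨e⟩⟩
        exact hS.iso_mem e hX₀
      · intro hx
        exact ⟨x, hx, ⟨Iso.refl _⟩⟩
    rw [this]; exact hS
  | succ m ih =>
    rw [← essImageSet_comp_itOb]
    exact twistTS_one ih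

/-- Mapping distinguished triangles through iterates of `τ`. -/
lemma it_dist (m : ℕ) (T : Triangle C) (hT : T ∈ distTriang C) :
    ∃ (u : itOb τ m T.obj₁ ⟶ itOb τ m T.obj₂) (v : itOb τ m T.obj₂ ⟶ itOb τ m T.obj₃)
      (w : itOb τ m T.obj₃ ⟶ (itOb τ m T.obj₁)⟦(1 : ℤ)⟧),
      Triangle.mk u v w ∈ distTriang C := by
  induction m with
  | zero => exact ⟨T.mor₁, T.mor₂, T.mor₃, hT⟩
  | succ m ih =>
    obtain ⟨u, v, w, hT'⟩ := ih
    rw [itOb_succ', itOb_succ', itOb_succ']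
    have := τ.functor.map_distinguished _ hT'
    exact ⟨_, _, _, this⟩

lemma natFilt_map {Afam : ℕ → Set C} {n : ℕ} {s : C} (hf : NatFilt Afam n s) :
    NatFilt (fun j => essImageSet (fun X : C => τ.functor.obj X) (Afam j)) n
      (τ.functor.obj s) := by
  obtain ⟨F, f, hz, h0, htri⟩ := hf
  subst h0
  refine ⟨fun j => τ.functor.obj (F j), fun j => τ.functor.map (f j),
    Functor.map_isZero _ hz, rfl, ?_⟩
  intro j hj
  obtain ⟨a, g, hh, hd, ha⟩ := htri j hj
  have := τ.functor.map_distinguished _ hd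
  exact ⟨τ.functor.obj a, τ.functor.map g,
    τ.functor.map hh ≫ (τ.functor.commShiftIso (1 : ℤ)).hom.app _, this, ⟨a, ha, ⟨Iso.refl _⟩⟩⟩

end Twist

lemma isTriangSub_isZero : IsTriangSub {Z : C | IsZero Z} := by
  constructor
  · exact fun Z hZ => hZ
  · exact fun X Y e hX => hX.of_iso e.symm
  · exact fun X n hX => Functor.map_isZero _ hX
  · exact fun T hT h1 h2 => Triangle.isZero₃_of_isZero₁₂ T hT h1 h2

lemma isTriangSub_rightOrth {S : Set C} (hS : ∀ X ∈ S, ∀ n : ℤ, (X⟦n⟧ : C) ∈ S) :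
    IsTriangSub (rightOrth S) := by
  constructor
  · intro Z hZ X hX f
    exact hZ.eq_of_tgt f 0
  · intro X Y e hX W hW f
    exact conj_zero (Iso.refl _) e (fun g => hX hW g) f
  · intro X n hX W hW f
    refine hom_into_shift_zero (fun g => ?_) f
    exact hX (hS W hW (-n)) g
  · intro T hT h1 h2 W hW f
    have h3 : f ≫ T.mor₃ = 0 := by
      refine hom_into_shift_zero (fun g => ?_) (f ≫ T.mor₃)
      exact h1 (hS W hW (-1)) g
    obtain ⟨g, hg⟩ := Triangle.coyoneda_exact₃ T hT f h3
    rw [hg, h2 hW g, zero_comp]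

lemma isTriangSub_inter {S S' : Set C} (h : IsTriangSub S) (h' : IsTriangSub S') :
    IsTriangSub (S ∩ S') := by
  constructor
  · exact fun Z hZ => ⟨h.zero_mem hZ, h'.zero_mem hZ⟩
  · exact fun X Y e hX => ⟨h.iso_mem e hX.1, h'.iso_mem e hX.2⟩
  · exact fun X n hX => ⟨h.shift_mem n hX.1, h'.shift_mem n hX.2⟩
  · exact fun T hT h1 h2 => ⟨h.cone_mem T hT h1.1 h2.1, h'.cone_mem T hT h1.2 h2.2⟩

lemma dist_conj₂ {X Y Z Y' : C} {u : X ⟶ Y} {v : Y ⟶ Z} {w : Z ⟶ X⟦(1 : ℤ)⟧}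
    (hT : Triangle.mk u v w ∈ distTriang C) (e : Y ≅ Y') :
    Triangle.mk (u ≫ e.hom) (e.inv ≫ v) w ∈ distTriang C := by
  refine isomorphic_distinguished _ hT _ ?_
  exact Triangle.isoMk _ _ (Iso.refl _) e.symm (Iso.refl _) (by simp [Triangle.mk]) (by simp [Triangle.mk]) (by simp [Triangle.mk])

/-! ### Projection to an admissible subcategory, characterized by corepresentability -/

section Proj

variable {A0 : Set C}

/-- `u : X ⟶ a` exhibits `a` as the projection of `X` to `A0`. -/
def IsProjTo (A0 : Set C) {X a : C} (u : X ⟶ a) : Prop :=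
  a ∈ A0 ∧ ∀ Y ∈ A0, Function.Bijective (fun g : a ⟶ Y => u ≫ g)

lemma isProjTo_shift (hA0 : IsTriangSub A0) {X a : C} {u : X ⟶ a}
    (h : IsProjTo A0 u) (s : ℤ) : IsProjTo A0 ((shiftFunctor C s).map u) := by
  refine ⟨hA0.shift_mem s h.1, fun Y hY => ?_⟩
  have key : (fun g : a⟦s⟧ ⟶ Y => (shiftFunctor C s).map u ≫ g) =
      ((shiftEquiv C s).toAdjunction.homEquiv X Y).symm ∘
        (fun g : a ⟶ Y⟦-s⟧ => u ≫ g) ∘ ((shiftEquiv C s).toAdjunction.homEquiv a Y) := by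
    funext g
    show _ = ((shiftEquiv C s).toAdjunction.homEquiv X Y).symm
      (u ≫ ((shiftEquiv C s).toAdjunction.homEquiv a Y) g)
    erw [← Adjunction.homEquiv_naturality_left]
    simp
    rfl
  rw [key]
  exact (((shiftEquiv C s).toAdjunction.homEquiv X Y).symm.bijective.comp
    ((h.2 _ (hA0.shift_mem (-s) hY)).comp ((shiftEquiv C s).toAdjunction.homEquiv a Y).bijective))

lemma precomp_bij_of_triangle {X' X a : C} {u' : X' ⟶ X} {u : X ⟶ a} {w : a ⟶ X'⟦(1 : ℤ)⟧}
    (hT : Triangle.mk u' u w ∈ distTriang C)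
    {Y : C} (hvan : ∀ (s : ℤ) (f : X'⟦s⟧ ⟶ Y), f = 0) :
    Function.Bijective (fun g : a ⟶ Y => u ≫ g) := by
  have hvan0 : ∀ f : X' ⟶ Y, f = 0 := fun f =>
    conj_zero ((shiftFunctorZero C ℤ).app X').symm (Iso.refl _) (hvan 0) f
  constructor
  · intro g₁ g₂ hg
    have hsub : u ≫ (g₁ - g₂) = 0 := by
      rw [comp_sub, sub_eq_zero]
      exact hg
    obtain ⟨e, he⟩ := Triangle.yoneda_exact₃ _ hT (g₁ - g₂) hsub
    rw [hvan 1 e] at he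
    replace he := he.trans comp_zero
    exact sub_eq_zero.1 he
  · intro f
    obtain ⟨g, hg⟩ := Triangle.yoneda_exact₂ _ hT f (hvan0 _)
    exact ⟨g, hg.symm⟩

lemma isProjTo_of_triangle {X' X a : C} {u' : X' ⟶ X} {u : X ⟶ a} {w : a ⟶ X'⟦(1 : ℤ)⟧}
    (hT : Triangle.mk u' u w ∈ distTriang C) (ha : a ∈ A0)
    (hvan : ∀ Y ∈ A0, ∀ (s : ℤ) (f : X'⟦s⟧ ⟶ Y), f = 0) : IsProjTo A0 u :=
  ⟨ha, fun Y hY => precomp_bij_of_triangle hT (hvan Y hY)⟩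

lemma postcomp_bij_of_triangle {X' X a : C} {u' : X' ⟶ X} {u : X ⟶ a} {w : a ⟶ X'⟦(1 : ℤ)⟧}
    (hT : Triangle.mk u' u w ∈ distTriang C)
    {W : C} (hvan : ∀ (s : ℤ) (f : W ⟶ X'⟦s⟧), f = 0) :
    Function.Bijective (fun g : W ⟶ X => g ≫ u) := by
  have hvan0 : ∀ f : W ⟶ X', f = 0 := fun f =>
    conj_zero (Iso.refl _) ((shiftFunctorZero C ℤ).app X') (hvan 0) f
  constructor
  · intro g₁ g₂ hg
    have hsub : (g₁ - g₂) ≫ u = 0 := by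
      rw [sub_comp, sub_eq_zero]
      exact hg
    obtain ⟨e, he⟩ := Triangle.coyoneda_exact₂ _ hT (g₁ - g₂) hsub
    rw [hvan0 e] at he
    replace he := he.trans zero_comp
    exact sub_eq_zero.1 he
  · intro f
    have h3 : f ≫ w = 0 := hvan 1 _
    obtain ⟨g, hg⟩ := Triangle.coyoneda_exact₃ _ hT f h3
    exact ⟨g, hg.symm⟩

lemma isProjTo_unique {X a b : C} {u : X ⟶ a} {v : X ⟶ b}
    (h₁ : IsProjTo A0 u) (h₂ : IsProjTo A0 v) :
    ∃ e : b ≅ a, v ≫ e.hom = u ∧ u ≫ e.inv = v := by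
  obtain ⟨f, hf0⟩ := (h₂.2 a h₁.1).surjective u
  obtain ⟨g, hg0⟩ := (h₁.2 b h₂.1).surjective v
  have hf : v ≫ f = u := hf0
  have hg : u ≫ g = v := hg0
  have hfg : f ≫ g = 𝟙 b := by
    apply (h₂.2 b h₂.1).injective
    show v ≫ (f ≫ g) = v ≫ 𝟙 b
    rw [comp_id, ← assoc, hf, hg]
  have hgf : g ≫ f = 𝟙 a := by
    apply (h₁.2 a h₁.1).injective
    show u ≫ (g ≫ f) = u ≫ 𝟙 a
    rw [comp_id, ← assoc, hg, hf]
  exact ⟨⟨f, g, hfg, hgf⟩, hf, by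
    show u ≫ g = v
    exact hg⟩

lemma isProjTo_id {t : C} (ht : t ∈ A0) : IsProjTo A0 (𝟙 t) := by
  refine ⟨ht, fun Y hY => ?_⟩
  have : (fun g : t ⟶ Y => 𝟙 t ≫ g) = id := by
    funext g
    simp
  rw [this]
  exact Function.bijective_id

lemma isProjTo_zero {X Z : C} (hX : ∀ Y ∈ A0, ∀ f : X ⟶ Y, f = 0) (hZ : IsZero Z)
    (hZA : Z ∈ A0) : IsProjTo A0 (0 : X ⟶ Z) := by
  refine ⟨hZA, fun Y hY => ⟨?_, ?_⟩⟩
  · intro g₁ g₂ _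
    exact hZ.eq_of_src g₁ g₂
  · intro f
    refine ⟨0, ?_⟩
    show (0 : X ⟶ Z) ≫ (0 : Z ⟶ Y) = f
    rw [hX Y hY f, zero_comp]

/-- The five lemma: a projection for the third object of a triangle. -/
lemma isProjTo_five (hA0 : IsTriangSub A0) {T₁ T₂ : Triangle C}
    (hT₁ : T₁ ∈ distTriang C) (hT₂ : T₂ ∈ distTriang C) (φ : T₁ ⟶ T₂)
    (h₁ : IsProjTo A0 φ.hom₁) (h₂ : IsProjTo A0 φ.hom₂) (h₃mem : T₂.obj₃ ∈ A0) :
    IsProjTo A0 φ.hom₃ := by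
  have h₁s := isProjTo_shift hA0 h₁ 1
  have h₂s := isProjTo_shift hA0 h₂ 1
  refine ⟨h₃mem, fun Y hY => ⟨?_, ?_⟩⟩
  · -- injectivity
    intro g₁ g₂ hg
    rw [← sub_eq_zero]
    set h := g₁ - g₂ with hdef
    have hφ3 : φ.hom₃ ≫ h = 0 := by
      rw [hdef, comp_sub, sub_eq_zero]
      exact hg
    have hm2 : T₂.mor₂ ≫ h = 0 := by
      apply (h₂.2 Y hY).injective
      show φ.hom₂ ≫ T₂.mor₂ ≫ h = φ.hom₂ ≫ 0
      rw [comp_zero, ← assoc, ← φ.comm₂, assoc, hφ3, comp_zero]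
    obtain ⟨e, he⟩ := Triangle.yoneda_exact₃ _ hT₂ h hm2
    have hψ : T₁.mor₃ ≫ (φ.hom₁⟦(1 : ℤ)⟧' ≫ e) = 0 := by
      rw [← assoc, φ.comm₃, assoc, ← he, hφ3]
    obtain ⟨χ, hχ⟩ := Triangle.yoneda_exact₃ _ (rot_of_distTriang _ hT₁)
      (φ.hom₁⟦(1 : ℤ)⟧' ≫ e) hψ
    obtain ⟨χ', hχ'0⟩ := (h₂s.2 Y hY).surjective χ
    have hχ' : (shiftFunctor C (1 : ℤ)).map φ.hom₂ ≫ χ' = χ := hχ'0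
    have he0 : φ.hom₁⟦(1 : ℤ)⟧' ≫ (e + T₂.mor₁⟦(1 : ℤ)⟧' ≫ χ') = 0 := by
      have hc : φ.hom₁⟦(1 : ℤ)⟧' ≫ T₂.mor₁⟦(1 : ℤ)⟧' = T₁.mor₁⟦(1 : ℤ)⟧' ≫ φ.hom₂⟦(1 : ℤ)⟧' := by
        rw [← Functor.map_comp, ← Functor.map_comp, φ.comm₁]
      rw [comp_add]
      erw [hχ]
      rw [← assoc, hc, assoc, hχ']
      dsimp [Triangle.rotate]
      simp [Triangle.mk]
      exact (congrArg (fun x => x + (shiftFunctor C 1).map T₁.mor₁ ≫ χ) (neg_comp _ χ)).trans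
        (neg_add_cancel _)
    have he' : e + T₂.mor₁⟦(1 : ℤ)⟧' ≫ χ' = 0 := by
      apply (h₁s.2 Y hY).injective
      show _ = φ.hom₁⟦(1 : ℤ)⟧' ≫ 0
      rw [comp_zero]
      exact he0
    have hee : e = -(T₂.mor₁⟦(1 : ℤ)⟧' ≫ χ') := by
      rw [← sub_eq_zero, sub_neg_eq_add, add_comm]
      rw [add_comm] at he'
      exact he'
    rw [he, hee, comp_neg, ← assoc, comp_distTriang_mor_zero₃₁ _ hT₂, zero_comp, neg_zero]
  · -- surjectivity
    intro f
    obtain ⟨gbar, hgbar0⟩ := (h₂.2 Y hY).surjective (T₁.mor₂ ≫ f)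
    have hgbar : φ.hom₂ ≫ gbar = T₁.mor₂ ≫ f := hgbar0
    have hm1 : T₂.mor₁ ≫ gbar = 0 := by
      apply (h₁.2 Y hY).injective
      show φ.hom₁ ≫ T₂.mor₁ ≫ gbar = φ.hom₁ ≫ 0
      rw [comp_zero, ← assoc, ← φ.comm₁, assoc, hgbar, ← assoc,
        comp_distTriang_mor_zero₁₂ _ hT₁, zero_comp]
    obtain ⟨h', hh'⟩ := Triangle.yoneda_exact₂ _ hT₂ gbar hm1
    have hδ : T₁.mor₂ ≫ (f - φ.hom₃ ≫ h') = 0 := by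
      rw [comp_sub, ← assoc, φ.comm₂, assoc, ← hh', hgbar, sub_self]
    obtain ⟨e, he⟩ := Triangle.yoneda_exact₃ _ hT₁ _ hδ
    obtain ⟨ebar, hebar0⟩ := (h₁s.2 Y hY).surjective e
    have hebar : (shiftFunctor C (1 : ℤ)).map φ.hom₁ ≫ ebar = e := hebar0
    refine ⟨h' + T₂.mor₃ ≫ ebar, ?_⟩
    show φ.hom₃ ≫ (h' + T₂.mor₃ ≫ ebar) = f
    rw [comp_add, ← assoc, ← φ.comm₃, assoc, hebar, ← he]
    abel

lemma isProjTo_unit {A0 : Set C} (π : C ⥤ ObjectProperty.FullSubcategory (· ∈ A0))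
    (adj : π ⊣ ObjectProperty.ι (· ∈ A0)) (X : C) :
    IsProjTo A0 (adj.unit.app X) := by
  refine ⟨(π.obj X).property, fun Y hY => ?_⟩
  have key : (fun g : (π.obj X).obj ⟶ Y => adj.unit.app X ≫ g) =
      (adj.homEquiv X ⟨Y, hY⟩) ∘ ObjectProperty.homMk := by
    funext g
    rw [Function.comp_apply, Adjunction.homEquiv_unit]
    rfl
  have hb := (adj.homEquiv X ⟨Y, hY⟩).bijective.comp
    (f := ObjectProperty.homMk (X := π.obj X) (Y := ⟨Y, hY⟩))
    ⟨fun a b h => congrArg InducedCategory.Hom.hom h, ObjectProperty.homMk_surjective⟩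
  rw [← key] at hb
  exact hb

end Proj

/-! ### Lefschetz-specific lemmas -/

section Lefschetz

open ZeroObject Preadditive

variable {τ : C ≌ C} [τ.functor.CommShift ℤ] [τ.functor.IsTriangulated]
  {i : ℕ} {A : ℕ → Set C}

/-- The component `B m = A m (m)` of the Lefschetz decomposition. -/
def Bs (τ : C ≌ C) (A : ℕ → Set C) (m : ℕ) : Set C :=
  essImageSet (fun X : C => itOb τ m X) (A m)

/-- The twisted subcategory `A l (l+1)`. -/
def TwA (τ : C ≌ C) (A : ℕ → Set C) (l : ℕ) : Set C :=
  essImageSet (fun X : C => itOb τ (l + 1) X) (A l)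

/-- The twisted primitive part `𝔞 l (l+1)`. -/
def Qs (τ : C ≌ C) (A : ℕ → Set C) (l : ℕ) : Set C :=
  essImageSet (fun X : C => itOb τ (l + 1) X) (primComp A l)

variable (hL : IsLefschetz τ i A) (hAtop : A i = {Z : C | IsZero Z})
include hL hAtop

lemma A_sub : ∀ {b : ℕ}, b ≤ i → ∀ {a : ℕ}, a ≤ b → A b ⊆ A a := by
  intro b
  induction b with
  | zero =>
    intro _ a ha
    have : a = 0 := by omega
    subst this
    exact Set.Subset.rfl
  | succ m ih =>
    intro hbi a hab
    by_cases hab' : a = m + 1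
    · subst hab'
      exact Set.Subset.rfl
    · have h1 : A (m + 1) ⊆ A m := by
        by_cases hm : m + 1 < i
        · exact hL.desc m hm
        · have hmi : m + 1 = i := by omega
          intro x hx
          rw [hmi, hAtop] at hx
          exact ((hL.adm m (by omega)).1).zero_mem hx
      exact fun x hx => ih (by omega) (by omega) (h1 hx)

lemma A_TS {m : ℕ} (hm : m ≤ i) : IsTriangSub (A m) := by
  by_cases hm' : m < i
  · exact (hL.adm m hm').1
  · have : m = i := by omega
    rw [this, hAtop]
    exact isTriangSub_isZero

lemma B_TS {m : ℕ} (hm : m ≤ i) : IsTriangSub (Bs τ A m) :=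
  twistTS m (A_TS hL hAtop hm)

lemma TwA_TS {l : ℕ} (hl : l < i) : IsTriangSub (TwA τ A l) :=
  twistTS (l + 1) (A_TS hL hAtop (by omega))

lemma primComp_TS {l : ℕ} (hl : l < i) : IsTriangSub (primComp A l) := by
  refine isTriangSub_inter (A_TS hL hAtop (by omega)) (isTriangSub_rightOrth ?_)
  exact fun X hX n => (A_TS hL hAtop (by omega : l + 1 ≤ i)).shift_mem n hX

lemma Qs_TS {l : ℕ} (hl : l < i) : IsTriangSub (Qs τ A l) :=
  twistTS (l + 1) (primComp_TS hL hAtop hl)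

lemma Qs_subset_TwA {l : ℕ} : Qs τ A l ⊆ TwA τ A l := by
  rintro x ⟨X₀, hX₀, he⟩
  exact ⟨X₀, hX₀.1, he⟩

lemma O {s c t : ℕ} (hc1 : 1 ≤ c) (hcs : c ≤ s) (hsi : s < i) (hti : t ≤ i)
    {X₀ Y₀ : C} (hX : X₀ ∈ A s) (hY : Y₀ ∈ A t) (f : itOb τ c X₀ ⟶ Y₀) : f = 0 := by
  have hci : c < i := by omega
  have horth := hL.sod.semiorth (l := ⟨0, hL.pos⟩) (k := ⟨c, hci⟩)
    (by rw [Fin.lt_def]; simpa using by omega)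
  refine horth ?_ ?_ f
  · exact ⟨X₀, A_sub hL hAtop (le_of_lt hsi) hcs hX, ⟨Iso.refl _⟩⟩
  · exact ⟨Y₀, A_sub hL hAtop hti (Nat.zero_le t) hY, ⟨Iso.refl _⟩⟩

/-- Orthogonality of `A j (j+1)` against `B m` for `1 ≤ m ≤ j`. -/
lemma van_twA_B {j m : ℕ} (hj : j < i) (hm1 : 1 ≤ m) (hmj : m ≤ j) {x : C}
    (hx : x ∈ TwA τ A j) : ∀ g ∈ Bs τ A m, ∀ (n : ℤ) (f : x⟦n⟧ ⟶ g), f = 0 := by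
  obtain ⟨x₀, hx₀, ⟨e⟩⟩ := hx
  rintro g ⟨g₀, hg₀, ⟨eg⟩⟩ n f
  refine hom_zero_twist (τ := τ) (a := j + 1) (b := m) (by omega)
    ⟨(itShiftIso (j + 1) n x₀).symm ≪≫ (shiftFunctor C n).mapIso e⟩ ⟨eg⟩ ?_ f
  intro g'
  exact O hL hAtop (c := j + 1 - m) (s := j) (t := m) (by omega) (by omega) hj (by omega)
    ((A_TS hL hAtop (by omega)).shift_mem n hx₀) hg₀ g'

/-- Vanishing of maps from `generated (B 1 ∪ ... ∪ B l)` (shifted) into `A 0`. -/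
lemma vanA0_of_gen {l : ℕ} (hl : l < i) {Z : C}
    (hZ : Z ∈ generated (⋃ m ∈ Set.Icc 1 l, Bs τ A m)) :
    ∀ Y ∈ A 0, ∀ (s : ℤ) (f : Z⟦s⟧ ⟶ Y), f = 0 := by
  intro Y hY s f
  have key : ∀ W ∈ generated (⋃ m ∈ Set.Icc 1 l, Bs τ A m), ∀ (n : ℤ) (f : W ⟶ Y⟦n⟧), f = 0 := by
    refine vanish_from_generated (fun g hg n f => ?_)
    obtain ⟨m, hm, hgm⟩ := by simpa using hg
    refine hom_into_shift_zero (fun g' => ?_) f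
    obtain ⟨g₀, hg₀, ⟨e'⟩⟩ := (B_TS hL hAtop (by omega : m ≤ i)).shift_mem (-n) hgm
    refine hom_zero_twist (τ := τ) (a := m) (b := 0) (by omega) ⟨e'⟩ ⟨Iso.refl Y⟩ ?_ g'
    intro g''
    exact O hL hAtop (c := m) (s := m) (t := 0) (by omega) (le_refl m) (by omega) (by omega)
      hg₀ hY g''
  have h0 := key (Z⟦s⟧) ((isTriangSub_generated _).shift_mem s hZ) 0
  exact conj_zero (Iso.refl _) ((shiftFunctorZero C ℤ).app Y) h0 f

/-- Orthogonality of `B m`, `m ≥ l+1`, against the primitive part `𝔞 l (l+1)`. -/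
lemma van_B_Qs {l : ℕ} (hl : l < i) {q : C} (hq : q ∈ Qs τ A l) :
    ∀ m, l + 1 ≤ m → m < i → ∀ c ∈ Bs τ A m, ∀ f : c ⟶ q, f = 0 := by
  obtain ⟨q₀, hq₀, ⟨eq'⟩⟩ := hq
  rintro m hm1 hmi c ⟨c₀, hc₀, ⟨ec⟩⟩ f
  refine hom_zero_twist (τ := τ) (a := m) (b := l + 1) (by omega) ⟨ec⟩ ⟨eq'⟩ ?_ f
  by_cases hm' : m = l + 1
  · subst hm'
    rw [Nat.sub_self]
    intro g
    exact hq₀.2 (show itOb τ 0 c₀ ∈ A (l + 1) from hc₀) g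
  · intro g
    exact O hL hAtop (c := m - (l + 1)) (s := m) (t := l) (by omega) (by omega) hmi (by omega)
      hc₀ hq₀.1 g

lemma Bs_semiorth {l' k : ℕ} (hlk : l' < k) (hk : k < i) :
    HomOrth (Bs τ A k) (Bs τ A l') := by
  have h := hL.sod.semiorth (l := ⟨l', by omega⟩) (k := ⟨k, hk⟩)
    (by rw [Fin.lt_def]; simpa using hlk)
  exact h

lemma decomp_A {l : ℕ} (hl : l < i) {a₀ : C} (ha : a₀ ∈ A l) :
    ∃ (x₀ q₀ : C) (u : x₀ ⟶ a₀) (v : a₀ ⟶ q₀) (w : q₀ ⟶ x₀⟦(1 : ℤ)⟧),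
      (Triangle.mk u v w ∈ distTriang C) ∧ x₀ ∈ A (l + 1) ∧ q₀ ∈ primComp A l := by
  by_cases hli : l + 1 < i
  case neg =>
    have hli' : l + 1 = i := by omega
    refine ⟨0, a₀, 0, 𝟙 a₀, 0, contractible_distinguished₁ a₀, ?_, ha, ?_⟩
    · rw [hli', hAtop]
      exact isZero_zero C
    · intro c hc f
      rw [hli', hAtop] at hc
      exact hc.eq_of_src f 0
  case pos =>
    haveI := (hL.adm (l + 1) hli).2.2
    set ι := ObjectProperty.ι (· ∈ A (l + 1)) with hι
    set adjR : ι ⊣ ι.rightAdjoint := Adjunction.ofIsLeftAdjoint ι with hadjR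
    have counit_bij : ∀ (c : C), c ∈ A (l + 1) → ∀ (W : C),
        Function.Bijective (fun g : c ⟶ ι.obj (ι.rightAdjoint.obj W) =>
          g ≫ adjR.counit.app W) := by
      intro c hc W
      constructor
      · intro g₁ g₂ hgg
        have k₁ : (adjR.homEquiv ⟨c, hc⟩ W).symm (ObjectProperty.homMk g₁) = g₁ ≫ adjR.counit.app W :=
          adjR.homEquiv_counit ⟨c, hc⟩ W _
        have k₂ : (adjR.homEquiv ⟨c, hc⟩ W).symm (ObjectProperty.homMk g₂) = g₂ ≫ adjR.counit.app W :=
          adjR.homEquiv_counit ⟨c, hc⟩ W _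
        have e1 : (adjR.homEquiv ⟨c, hc⟩ W).symm (ObjectProperty.homMk g₁) =
            (adjR.homEquiv ⟨c, hc⟩ W).symm (ObjectProperty.homMk g₂) := by
          rw [k₁, k₂]
          exact hgg
        exact congrArg InducedCategory.Hom.hom ((adjR.homEquiv _ _).symm.injective e1)
      · intro f
        refine ⟨((adjR.homEquiv ⟨c, hc⟩ W) f).hom, ?_⟩
        have k : (adjR.homEquiv ⟨c, hc⟩ W).symm ((adjR.homEquiv ⟨c, hc⟩ W) f) =
            ι.map ((adjR.homEquiv ⟨c, hc⟩ W) f) ≫ adjR.counit.app W :=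
          adjR.homEquiv_counit ⟨c, hc⟩ W _
        rw [Equiv.symm_apply_apply] at k
        exact k.symm
    set x₀ := ι.obj (ι.rightAdjoint.obj a₀) with hx₀def
    set ε : x₀ ⟶ a₀ := adjR.counit.app a₀ with hεdef
    obtain ⟨q₀, v, w, hT⟩ := distinguished_cocone_triangle ε
    have hx₀ : x₀ ∈ A (l + 1) := (ι.rightAdjoint.obj a₀).property
    have hq₀A : q₀ ∈ A l := by
      refine (A_TS hL hAtop (by omega : l ≤ i)).cone_mem _ hT ?_ ha
      exact A_sub hL hAtop (by omega : l + 1 ≤ i) (by omega) hx₀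
    refine ⟨x₀, q₀, ε, v, w, hT, hx₀, hq₀A, ?_⟩
    intro c hc f
    set θ := shiftFunctorCompIsoId C (1 : ℤ) (-1) (by omega) with hθ
    have hwε : w ≫ (shiftFunctor C (1 : ℤ)).map ε = 0 :=
      comp_distTriang_mor_zero₃₁ _ hT
    have hfw : f ≫ w = 0 := by
      have hkey : ((f ≫ w)⟦(-1 : ℤ)⟧' ≫ θ.hom.app x₀) ≫ ε = 0 := by
        have hnat : θ.hom.app x₀ ≫ ε =
            (((shiftFunctor C (1 : ℤ)).map ε)⟦(-1 : ℤ)⟧') ≫ θ.hom.app a₀ :=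
          (θ.hom.naturality ε).symm
        rw [assoc, hnat, ← assoc, ← Functor.map_comp, assoc, hwε, comp_zero,
          Functor.map_zero, zero_comp]
      have h0 : (f ≫ w)⟦(-1 : ℤ)⟧' ≫ θ.hom.app x₀ = 0 := by
        refine (counit_bij (c⟦(-1 : ℤ)⟧)
          ((A_TS hL hAtop (by omega : l + 1 ≤ i)).shift_mem (-1) hc) a₀).injective ?_
        show ((f ≫ w)⟦(-1 : ℤ)⟧' ≫ θ.hom.app x₀) ≫ ε = (0 : c⟦(-1 : ℤ)⟧ ⟶ x₀) ≫ ε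
        rw [hkey, zero_comp]
      have h1 : (f ≫ w)⟦(-1 : ℤ)⟧' = 0 := by
        calc (f ≫ w)⟦(-1 : ℤ)⟧' = ((f ≫ w)⟦(-1 : ℤ)⟧' ≫ θ.hom.app x₀) ≫ θ.inv.app x₀ := by simp
        _ = 0 := by rw [h0, zero_comp]
      apply (shiftFunctor C (-1 : ℤ)).map_injective
      rw [h1, Functor.map_zero]
    obtain ⟨g, hg⟩ := Triangle.coyoneda_exact₃ _ hT f hfw
    obtain ⟨g', hg'0⟩ := (counit_bij c hc a₀).surjective g
    have hg' : g' ≫ ε = g := hg'0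
    have h12 : ε ≫ (Triangle.mk ε v w).mor₂ = 0 := comp_distTriang_mor_zero₁₂ _ hT
    rw [hg, ← hg']
    exact (assoc _ _ _).trans ((congrArg (fun x => g' ≫ x) h12).trans comp_zero)

lemma decomp_TwA {l : ℕ} (hl : l < i) {a : C} (ha : a ∈ TwA τ A l) :
    ∃ (x q : C) (u : x ⟶ a) (v : a ⟶ q) (w : q ⟶ x⟦(1 : ℤ)⟧),
      (Triangle.mk u v w ∈ distTriang C) ∧
      x ∈ essImageSet (fun X : C => itOb τ (l + 1) X) (A (l + 1)) ∧ q ∈ Qs τ A l := by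
  obtain ⟨a₀, ha₀, ⟨e⟩⟩ := ha
  obtain ⟨x₀, q₀, u₀, v₀, w₀, hT₀, hx₀, hq₀⟩ := decomp_A hL hAtop hl ha₀
  obtain ⟨u', v', w', hT'⟩ := it_dist (τ := τ) (l + 1) (Triangle.mk u₀ v₀ w₀) hT₀
  refine ⟨itOb τ (l + 1) x₀, itOb τ (l + 1) q₀, u' ≫ e.hom, e.inv ≫ v', w',
    dist_conj₂ hT' e, ⟨x₀, hx₀, ⟨Iso.refl _⟩⟩, ⟨q₀, hq₀, ⟨Iso.refl _⟩⟩⟩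

lemma q_proj {l : ℕ} (hl : l < i) {q : C} (hq : q ∈ Qs τ A l) :
    ∃ (q' a : C) (u' : q' ⟶ q) (u : q ⟶ a) (w : a ⟶ q'⟦(1 : ℤ)⟧),
      (Triangle.mk u' u w ∈ distTriang C) ∧ a ∈ A 0 ∧
      (∀ Y ∈ A 0, ∀ (s : ℤ) (f : q'⟦s⟧ ⟶ Y), f = 0) ∧
      q' ∈ generated (⋃ m ∈ Set.Icc 1 l, Bs τ A m) := by
  have hfull : NatFilt (Bs τ A) i q := by
    refine natFilt_of_hasFiltration (A := fun j : Fin i => twistSet τ ((j : ℕ) : ℤ) (A (j : ℕ)))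
      ?_ (hL.sod.filt q)
    intro j x hx
    exact hx
  have htr : NatFilt (Bs τ A) (l + 1) q := by
    refine natFilt_truncate (fun j hj => B_TS hL hAtop (le_of_lt hj))
      (fun l' k hlk hk => Bs_semiorth hL hAtop hlk hk) hfull (by omega) ?_
    intro j hj1 hj2 c hc f
    exact van_B_Qs hL hAtop hl hq j hj1 hj2 c hc f
  obtain ⟨t', a, w', g, h, hd, ha, htail⟩ := natFilt_peel htr
  have htailgen : t' ∈ generated (⋃ m ∈ Set.Icc 1 l, Bs τ A m) := by
    refine natFilt_mem (isTriangSub_generated _) (fun j hj x hx => ?_) htail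
    exact subset_generated _ (Set.mem_biUnion (⟨by omega, by omega⟩ : j + 1 ∈ Set.Icc 1 l) hx)
  refine ⟨t', a, w', g, h, hd, ?_, ?_, htailgen⟩
  · obtain ⟨a₀, ha₀, ⟨e⟩⟩ := ha
    exact (A_TS hL hAtop (by omega : 0 ≤ i)).iso_mem e ha₀
  · intro Y hY s f
    exact vanA0_of_gen hL hAtop hl htailgen Y hY s f

lemma vanA0_of_twA_succ {l : ℕ} (hl : l < i) {x : C}
    (hx : x ∈ essImageSet (fun X : C => itOb τ (l + 1) X) (A (l + 1))) :
    ∀ Y ∈ A 0, ∀ (s : ℤ) (f : x⟦s⟧ ⟶ Y), f = 0 := by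
  obtain ⟨x₀, hx₀, ⟨e⟩⟩ := hx
  intro Y hY s f
  by_cases hli : l + 1 < i
  · refine hom_zero_twist (τ := τ) (a := l + 1) (b := 0) (by omega)
      ⟨(itShiftIso (l + 1) s x₀).symm ≪≫ (shiftFunctor C s).mapIso e⟩ ⟨Iso.refl Y⟩ ?_ f
    intro g
    exact O hL hAtop (c := l + 1) (s := l + 1) (t := 0) (by omega) (le_refl _) hli (by omega)
      ((A_TS hL hAtop (by omega)).shift_mem s hx₀) hY g
  · have hz : IsZero x₀ := by
      rw [show l + 1 = i by omega, hAtop] at hx₀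
      exact hx₀
    have hzx : IsZero x := (itOb_isZero hz).of_iso e.symm
    exact (Functor.map_isZero _ hzx).eq_of_src f 0

lemma TwA_proj {l : ℕ} (hl : l < i) {a : C} (ha : a ∈ TwA τ A l) :
    ∃ (b qq : C) (u : a ⟶ b) (uq : qq ⟶ b), IsProjTo (A 0) u ∧ qq ∈ Qs τ A l ∧
      IsProjTo (A 0) uq := by
  obtain ⟨x, q, u, v, w, hT, hx, hq⟩ := decomp_TwA hL hAtop hl ha
  obtain ⟨q', aq, u', uq, wq, hTq, haq, hvanq', hq'gen⟩ := q_proj hL hAtop hl hq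
  have hprojq : IsProjTo (A 0) uq := isProjTo_of_triangle hTq haq hvanq'
  refine ⟨aq, q, v ≫ uq, uq, ⟨haq, fun Y hY => ?_⟩, hq, hprojq⟩
  have hbij_v : Function.Bijective (fun g : q ⟶ Y => v ≫ g) :=
    precomp_bij_of_triangle hT (fun s f => vanA0_of_twA_succ hL hAtop hl hx Y hY s f)
  have hcomp : (fun g : aq ⟶ Y => (v ≫ uq) ≫ g) =
      (fun g : q ⟶ Y => v ≫ g) ∘ (fun g : aq ⟶ Y => uq ≫ g) := by
    funext g
    show (v ≫ uq) ≫ g = v ≫ (uq ≫ g)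
    rw [assoc]
  rw [hcomp]
  exact hbij_v.comp (hprojq.2 Y hY)

lemma twisted_filt (t : C) : NatFilt (TwA τ A) i t := by
  have h0 : NatFilt (Bs τ A) i (τ.inverse.obj t) := by
    refine natFilt_of_hasFiltration (A := fun j : Fin i => twistSet τ ((j : ℕ) : ℤ) (A (j : ℕ)))
      ?_ (hL.sod.filt _)
    intro j x hx
    exact hx
  have h1 := natFilt_map (τ := τ) h0
  have h2 : NatFilt (TwA τ A) i (τ.functor.obj (τ.inverse.obj t)) := by
    refine natFilt_mono (fun m hm => ?_) h1
    rintro x ⟨y, ⟨y₀, hy₀, ⟨e₀⟩⟩, ⟨e⟩⟩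
    refine ⟨y₀, hy₀, ⟨?_⟩⟩
    show itOb τ (m + 1) y₀ ≅ x
    rw [itOb_succ']
    exact (τ.functor.mapIso e₀).trans e
  exact natFilt_iso (τ.counitIso.app t) h2

lemma van_Qs_gen {lj ll : ℕ} (hji : lj < i) (hll : ll ≤ lj) {F : C} (hF : F ∈ Qs τ A lj)
    {Z : C} (hZ : Z ∈ generated (⋃ m ∈ Set.Icc 1 ll, Bs τ A m)) (f : F ⟶ Z) : f = 0 := by
  have key : ∀ W ∈ generated (⋃ m ∈ Set.Icc 1 ll, Bs τ A m),
      ∀ (n : ℤ) (g : F⟦n⟧ ⟶ W), g = 0 := by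
    refine vanish_into_generated ?_
    rintro g hg n f1
    obtain ⟨m, ⟨hm1, hm2⟩, hgm⟩ := by simpa using hg
    exact van_twA_B hL hAtop hji (by omega) (by omega) (Qs_subset_TwA hL hAtop hF) g hgm n f1
  exact conj_zero ((shiftFunctorZero C ℤ).app F).symm (Iso.refl _) (key Z hZ 0) f

lemma hom_Qs_zero {lj ll : ℕ} (hlt : ll < lj) (hji : lj < i) {F G : C}
    (hF : F ∈ Qs τ A lj) (hG : G ∈ Qs τ A ll) (f : F ⟶ G) : f = 0 := by
  obtain ⟨F₀, hF₀, ⟨eF⟩⟩ := hF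
  obtain ⟨G₀, hG₀, ⟨eG⟩⟩ := hG
  refine hom_zero_twist (τ := τ) (a := lj + 1) (b := ll + 1) (by omega) ⟨eF⟩ ⟨eG⟩ ?_ f
  intro g
  exact O hL hAtop (c := lj + 1 - (ll + 1)) (s := lj) (t := ll) (by omega) (by omega) hji
    (by omega) hF₀.1 hG₀.1 g

lemma hom_Qs_projQ_zero {lj ll : ℕ} (hlt : ll < lj) (hji : lj < i) {F G : C}
    (hF : F ∈ Qs τ A lj) (hG : G ∈ Qs τ A ll) {aG G' : C} {u' : G' ⟶ G} {u : G ⟶ aG}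
    {w : aG ⟶ G'⟦(1 : ℤ)⟧} (hT : Triangle.mk u' u w ∈ distTriang C)
    (hgen : G' ∈ generated (⋃ m ∈ Set.Icc 1 ll, Bs τ A m)) (f : F ⟶ aG) : f = 0 := by
  have h3 : f ≫ w = 0 := van_Qs_gen hL hAtop hji (by omega) hF
    ((isTriangSub_generated _).shift_mem 1 hgen) _
  obtain ⟨g2, hg2⟩ := Triangle.coyoneda_exact₃ _ hT f h3
  rw [hg2, hom_Qs_zero hL hAtop hlt hji hF hG g2]
  exact zero_comp

lemma P_semiorth (π : C ⥤ ObjectProperty.FullSubcategory (· ∈ A 0))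
    (adj : π ⊣ ObjectProperty.ι (· ∈ A 0)) {lj ll : ℕ} (hlt : ll < lj) (hji : lj < i) :
    HomOrth (projImageSet π (Qs τ A lj)) (projImageSet π (Qs τ A ll)) := by
  have hA0TS : IsTriangSub (A 0) := (hL.adm 0 hL.pos).1
  rintro x ⟨F, hF, ⟨eF⟩⟩ y ⟨G, hG, ⟨eG⟩⟩ f
  refine conj_zero eF.symm eG ?_ f
  intro f'
  have hGmem : (π.obj G).obj ∈ A 0 := (π.obj G).property
  refine ((isProjTo_unit π adj F).2 _ hGmem).injective ?_
  show adj.unit.app F ≫ f' = adj.unit.app F ≫ 0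
  rw [comp_zero]
  -- it suffices that all maps F ⟶ ιπG vanish
  obtain ⟨G', aG, u', u, w, hT, haG, hvan, hgen⟩ := q_proj hL hAtop (by omega : ll < i) hG
  have hprojG : IsProjTo (A 0) u := isProjTo_of_triangle hT haG hvan
  obtain ⟨e, _, _⟩ := isProjTo_unique hprojG (isProjTo_unit π adj G)
  refine conj_zero (Iso.refl F) e.symm ?_ _
  intro gg
  exact hom_Qs_projQ_zero hL hAtop hlt hji hF hG hT hgen gg

lemma filt_main (π : C ⥤ ObjectProperty.FullSubcategory (· ∈ A 0))
    (adj : π ⊣ ObjectProperty.ι (· ∈ A 0)) :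
    ∀ (d l : ℕ), l + d = i → ∀ (X : C), NatFilt (fun j' => TwA τ A (j' + l)) d X →
      ∃ (G : C) (u : X ⟶ G), IsProjTo (A 0) u ∧
        NatFilt (fun j' => projImageSet π (Qs τ A (j' + l))) d G := by
  have hA0TS : IsTriangSub (A 0) := (hL.adm 0 hL.pos).1
  intro d
  induction d with
  | zero =>
    intro l hl X hX
    obtain ⟨F, f, hz, h0, _⟩ := hX
    subst h0
    refine ⟨0, 0, ?_, natFilt_of_isZero (isZero_zero C)⟩
    exact isProjTo_zero (fun Y hY f' => hz.eq_of_src f' 0) (isZero_zero C)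
      (hA0TS.zero_mem (isZero_zero C))
  | succ d ih =>
    intro l hl X hX
    obtain ⟨X', a₀, w, g, h, hd, ha₀, htail⟩ := natFilt_peel hX
    have ha₀' : a₀ ∈ TwA τ A l := by
      have : (0 : ℕ) + l = l := by omega
      rw [← this]
      exact ha₀
    have htail' : NatFilt (fun j' => TwA τ A (j' + (l + 1))) d X' :=
      natFilt_congr (fun j' hj' => by rw [show j' + 1 + l = j' + (l + 1) from by omega]) htail
    obtain ⟨G', u', hproj', hfilt'⟩ := ih (l + 1) (by omega) X' htail'
    have hli : l < i := by omega
    obtain ⟨b, qq, ub, uqb, hprojb, hqq, hprojqq⟩ := TwA_proj hL hAtop hli ha₀'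
    have hproj₁ : IsProjTo (A 0) ((shiftFunctor C (-1 : ℤ)).map ub) :=
      isProjTo_shift hA0TS hprojb (-1)
    obtain ⟨abar, habar0⟩ := (hproj₁.2 G' hproj'.1).surjective
      ((Triangle.mk w g h).invRotate.mor₁ ≫ u')
    have habar : (shiftFunctor C (-1 : ℤ)).map ub ≫ abar =
        (Triangle.mk w g h).invRotate.mor₁ ≫ u' := habar0
    obtain ⟨Q, q2, q3, hTQ⟩ := distinguished_cocone_triangle abar
    obtain ⟨u₃, hc₁, hc₂⟩ := complete_distinguished_triangle_morphism
      (Triangle.mk w g h).invRotate (Triangle.mk abar q2 q3)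
      (inv_rot_of_distTriang _ hd) hTQ _ u' habar.symm
    have hQmem : Q ∈ A 0 := hA0TS.cone_mem _ hTQ (hA0TS.shift_mem (-1) hprojb.1) hproj'.1
    have hproj₃ : IsProjTo (A 0) u₃ := by
      refine isProjTo_five hA0TS (inv_rot_of_distTriang _ hd) hTQ
        { hom₁ := (shiftFunctor C (-1 : ℤ)).map ub, hom₂ := u', hom₃ := u₃,
          comm₁ := habar.symm, comm₂ := hc₁, comm₃ := hc₂ } hproj₁ hproj' hQmem
    -- b ∈ P l
    have hbP : b ∈ projImageSet π (Qs τ A l) := by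
      obtain ⟨e, _, _⟩ := isProjTo_unique hprojqq (isProjTo_unit π adj qq)
      exact ⟨qq, hqq, ⟨e⟩⟩
    have hshiftiso : ((b⟦(-1 : ℤ)⟧)⟦(1 : ℤ)⟧ : C) ≅ b :=
      (shiftFunctorCompIsoId C (-1 : ℤ) (1 : ℤ) (by omega)).app b
    have haQ : ((b⟦(-1 : ℤ)⟧)⟦(1 : ℤ)⟧ : C) ∈
        (fun j' => projImageSet π (Qs τ A (j' + l))) 0 := by
      show _ ∈ projImageSet π (Qs τ A (0 + l))
      rw [show (0 : ℕ) + l = l from by omega]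
      obtain ⟨qq', hqq', ⟨e'⟩⟩ := hbP
      exact ⟨qq', hqq', ⟨e'.trans hshiftiso.symm⟩⟩
    have htailP : NatFilt (fun j' => projImageSet π (Qs τ A (j' + 1 + l))) d G' :=
      natFilt_congr (fun j' hj' => by rw [show j' + (l + 1) = j' + 1 + l from by omega]) hfilt'
    refine ⟨Q, u₃, hproj₃, ?_⟩
    refine natFilt_cons (t' := G') (w := q2) (g := q3)
      (h := -((shiftFunctor C (1 : ℤ)).map abar))
      (show Triangle.mk q2 q3 _ ∈ distTriang C from rot_of_distTriang _ hTQ) haQ htailP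

end Lefschetz

end Machinery


section Statements

open ZeroObject Preadditive

variable [HasZeroObject C] [Preadditive C] [HasShift C ℤ]
  [∀ n : ℤ, (shiftFunctor C n).Additive] [Pretriangulated C]

/-- cf. Lemma 2.12 / `Lem. lem:sod:A_0`: given a Lefschetz decomposition
`T = ⟨A 0, (A 1)(1), …, (A (i-1))(i-1)⟩` and `1 ≤ k ≤ i`, the sequence
`α₀^*(𝔞_0(1)), …, α₀^*(𝔞_{k-1}(k))` is semiorthogonal,
`⟨α₀^*(𝔞_0(1)), …, α₀^*(𝔞_{k-1}(k)), A 1 (1), …, A k (k)⟩ = ⟨A 0 (1), …, A (k-1) (k)⟩`,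
and for `k = i` one obtains a semiorthogonal decomposition of `A 0`. -/
theorem statement0 (τ : C ≌ C) [τ.functor.CommShift ℤ] [τ.functor.IsTriangulated]
    (i : ℕ) (A : ℕ → Set C) (hL : IsLefschetz τ i A)
    (hAtop : A i = {Z : C | IsZero Z})
    (π : C ⥤ ObjectProperty.FullSubcategory (· ∈ A 0))
    (adj : π ⊣ ObjectProperty.ι (· ∈ A 0))
    (k : ℕ) (hk1 : 1 ≤ k) (hki : k ≤ i) :
    Semiorthogonal (fun j : Fin k =>
        projImageSet π (twistSet τ ((j : ℕ) + 1 : ℤ) (primComp A (j : ℕ)))) ∧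
    generated ((⋃ j : Fin k, projImageSet π (twistSet τ ((j : ℕ) + 1 : ℤ) (primComp A (j : ℕ)))) ∪
        (⋃ j : Fin k, twistSet τ ((j : ℕ) + 1 : ℤ) (A ((j : ℕ) + 1)))) =
      generated (⋃ j : Fin k, twistSet τ ((j : ℕ) + 1 : ℤ) (A (j : ℕ))) ∧
    (k = i → IsSODWithin (A 0) (fun j : Fin i =>
        projImageSet π (twistSet τ ((j : ℕ) + 1 : ℤ) (primComp A (j : ℕ))))) := by
  have hA0TS : IsTriangSub (A 0) := (hL.adm 0 hL.pos).1
  have hPset : ∀ l : ℕ, projImageSet π (twistSet τ ((l : ℤ) + 1) (primComp A l)) =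
      projImageSet π (Qs τ A l) := by
    intro l
    have h : ((l : ℤ) + 1) = ((l + 1 : ℕ) : ℤ) := by push_cast; ring
    rw [h]
    rfl
  have hTwSet : ∀ l : ℕ, twistSet τ ((l : ℤ) + 1) (A l) = TwA τ A l := by
    intro l
    have h : ((l : ℤ) + 1) = ((l + 1 : ℕ) : ℤ) := by push_cast; ring
    rw [h]
    rfl
  have hTwSet' : ∀ l : ℕ, twistSet τ ((l : ℤ) + 1) (A (l + 1)) =
      essImageSet (fun X : C => itOb τ (l + 1) X) (A (l + 1)) := by
    intro l
    have h : ((l : ℤ) + 1) = ((l + 1 : ℕ) : ℤ) := by push_cast; ring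
    rw [h]
    rfl
  have hsemi_main : Semiorthogonal (fun j : Fin k =>
      projImageSet π (twistSet τ ((j : ℕ) + 1 : ℤ) (primComp A (j : ℕ)))) := by
    intro l k' hlk
    show HomOrth (projImageSet π (twistSet τ ((k' : ℕ) + 1 : ℤ) (primComp A (k' : ℕ))))
      (projImageSet π (twistSet τ ((l : ℕ) + 1 : ℤ) (primComp A (l : ℕ))))
    rw [hPset, hPset]
    exact P_semiorth hL hAtop π adj (Fin.lt_def.mp hlk) (lt_of_lt_of_le k'.isLt hki)
  refine ⟨hsemi_main, ?_, ?_⟩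
  · -- the generated equality
    apply subset_antisymm
    · refine generated_min (isTriangSub_generated _) ?_
      rintro x (hx | hx)
      · obtain ⟨j, hx⟩ := Set.mem_iUnion.mp hx
        rw [hPset] at hx
        obtain ⟨F, hF, ⟨eF⟩⟩ := hx
        have hjk : (j : ℕ) < k := j.isLt
        have hji : (j : ℕ) < i := by omega
        obtain ⟨F', aF, u', u, w, hT, haF, hvan, hgen⟩ := q_proj hL hAtop hji hF
        have hBV : ∀ m : ℕ, 1 ≤ m → m ≤ (j : ℕ) → Bs τ A m ⊆
            generated (⋃ j' : Fin k, twistSet τ ((j' : ℕ) + 1 : ℤ) (A (j' : ℕ))) := by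
          intro m hm1 hmj y hy
          refine subset_generated _ (Set.mem_iUnion.mpr ⟨⟨m - 1, by omega⟩, ?_⟩)
          rw [hTwSet]
          obtain ⟨y₀, hy₀, ⟨ey⟩⟩ := hy
          refine ⟨y₀, A_sub hL hAtop (by omega : m ≤ i) (show m - 1 ≤ m from Nat.sub_le m 1)
            hy₀, ⟨?_⟩⟩
          show itOb τ ((m - 1) + 1) y₀ ≅ y
          rw [show m - 1 + 1 = m from by omega]
          exact ey
        have hF'mem : F' ∈
            generated (⋃ j' : Fin k, twistSet τ ((j' : ℕ) + 1 : ℤ) (A (j' : ℕ))) := by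
          refine generated_min (isTriangSub_generated _) ?_ hgen
          rintro z hz
          obtain ⟨m, ⟨hm1, hm2⟩, hzm⟩ := by simpa using hz
          exact hBV m hm1 (by omega) hzm
        have hFmem : F ∈
            generated (⋃ j' : Fin k, twistSet τ ((j' : ℕ) + 1 : ℤ) (A (j' : ℕ))) := by
          refine subset_generated _ (Set.mem_iUnion.mpr ⟨j, ?_⟩)
          rw [hTwSet]
          exact Qs_subset_TwA hL hAtop hF
        have haFmem := (isTriangSub_generated _).cone_mem _ hT hF'mem hFmem
        have hprojF : IsProjTo (A 0) u := isProjTo_of_triangle hT haF hvan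
        obtain ⟨e, _, _⟩ := isProjTo_unique hprojF (isProjTo_unit π adj F)
        exact (isTriangSub_generated _).iso_mem (e.symm.trans eF) haFmem
      · obtain ⟨j, hx⟩ := Set.mem_iUnion.mp hx
        have hjk : (j : ℕ) < k := j.isLt
        rw [hTwSet'] at hx
        obtain ⟨y₀, hy₀, ⟨ey⟩⟩ := hx
        refine subset_generated _ (Set.mem_iUnion.mpr ⟨j, ?_⟩)
        rw [hTwSet]
        exact ⟨y₀, A_sub hL hAtop (by omega : (j : ℕ) + 1 ≤ i) (by omega) hy₀, ⟨ey⟩⟩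
    · refine generated_min (isTriangSub_generated _) ?_
      rintro x hx
      obtain ⟨j, hx⟩ := Set.mem_iUnion.mp hx
      have hjk : (j : ℕ) < k := j.isLt
      have hji : (j : ℕ) < i := by omega
      rw [hTwSet] at hx
      obtain ⟨x₁, q, u, v, w, hT, hx₁, hq⟩ := decomp_TwA hL hAtop hji hx
      set U := (⋃ j' : Fin k,
          projImageSet π (twistSet τ ((j' : ℕ) + 1 : ℤ) (primComp A (j' : ℕ)))) ∪
        (⋃ j' : Fin k, twistSet τ ((j' : ℕ) + 1 : ℤ) (A ((j' : ℕ) + 1))) with hU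
      have hx₁U : x₁ ∈ generated U := by
        refine subset_generated _ (Or.inr (Set.mem_iUnion.mpr ⟨j, ?_⟩))
        rw [hTwSet']
        exact hx₁
      have hBsU : ∀ m : ℕ, 1 ≤ m → m ≤ (j : ℕ) → Bs τ A m ⊆ generated U := by
        intro m hm1 hmj y hy
        refine subset_generated _ (Or.inr (Set.mem_iUnion.mpr ⟨⟨m - 1, by omega⟩, ?_⟩))
        rw [hTwSet']
        show y ∈ essImageSet (fun X : C => itOb τ ((m - 1) + 1) X) (A ((m - 1) + 1))
        rw [show m - 1 + 1 = m from by omega]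
        exact hy
      obtain ⟨q', aq, u', uq, wq, hTq, haq, hvanq, hgenq⟩ := q_proj hL hAtop hji hq
      have hq'U : q' ∈ generated U := by
        refine generated_min (isTriangSub_generated _) ?_ hgenq
        rintro z hz
        obtain ⟨m, ⟨hm1, hm2⟩, hzm⟩ := by simpa using hz
        exact hBsU m hm1 hm2 hzm
      have haqU : aq ∈ generated U := by
        have hprojq : IsProjTo (A 0) uq := isProjTo_of_triangle hTq haq hvanq
        obtain ⟨e, _, _⟩ := isProjTo_unique hprojq (isProjTo_unit π adj q)
        refine subset_generated _ (Or.inl (Set.mem_iUnion.mpr ⟨j, ?_⟩))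
        rw [hPset]
        exact ⟨q, hq, ⟨e⟩⟩
      have hqU : q ∈ generated U :=
        (isTriangSub_generated U).cone_mem _ (inv_rot_of_distTriang _ hTq)
          ((isTriangSub_generated U).shift_mem (-1) haqU) hq'U
      exact (isTriangSub_generated U).cone_mem _ (inv_rot_of_distTriang _ hT)
        ((isTriangSub_generated U).shift_mem (-1) hqU) hx₁U
  · -- the SOD of A 0 when k = i
    intro hk
    subst hk
    refine ⟨?_, ?_, hsemi_main, ?_⟩
    · intro j
      rintro x ⟨F, hF, ⟨e⟩⟩
      exact hA0TS.iso_mem e (π.obj F).property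
    · intro j
      have hji : (j : ℕ) < k := j.isLt
      show IsTriangSub (projImageSet π (twistSet τ ((j : ℕ) + 1 : ℤ) (primComp A (j : ℕ))))
      rw [hPset]
      constructor
      · intro Z hZ
        have h0 : (0 : C) ∈ Qs τ A (j : ℕ) := (Qs_TS hL hAtop hji).zero_mem (isZero_zero C)
        refine ⟨0, h0, ?_⟩
        have hproj0 : IsProjTo (A 0) (0 : (0 : C) ⟶ Z) :=
          isProjTo_zero (fun Y hY f => (isZero_zero C).eq_of_src f 0) hZ (hA0TS.zero_mem hZ)
        obtain ⟨e, _, _⟩ := isProjTo_unique hproj0 (isProjTo_unit π adj 0)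
        exact ⟨e⟩
      · rintro X Y e ⟨F, hF, ⟨eF⟩⟩
        exact ⟨F, hF, ⟨eF.trans e⟩⟩
      · rintro X n ⟨F, hF, ⟨eF⟩⟩
        obtain ⟨G', aG, u', u, w, hT, haG, hvan, hgen⟩ := q_proj hL hAtop hji hF
        have hproj : IsProjTo (A 0) u := isProjTo_of_triangle hT haG hvan
        have hprojs := isProjTo_shift hA0TS hproj n
        refine ⟨F⟦n⟧, (Qs_TS hL hAtop hji).shift_mem n hF, ?_⟩
        obtain ⟨e2, _, _⟩ := isProjTo_unique hprojs (isProjTo_unit π adj (F⟦n⟧))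
        obtain ⟨e1, _, _⟩ := isProjTo_unique hproj (isProjTo_unit π adj F)
        exact ⟨e2.trans ((shiftFunctor C n).mapIso (e1.symm.trans eF))⟩
      · rintro T hT ⟨F₁, hF₁, ⟨e₁⟩⟩ ⟨F₂, hF₂, ⟨e₂⟩⟩
        obtain ⟨G₁', a₁, u₁', w₁u, w₁, hT₁, ha₁, hvan₁, hgen₁⟩ := q_proj hL hAtop hji hF₁
        obtain ⟨G₂', a₂, u₂', w₂u, w₂, hT₂, ha₂, hvan₂, hgen₂⟩ := q_proj hL hAtop hji hF₂
        have hproj₁ : IsProjTo (A 0) w₁u := isProjTo_of_triangle hT₁ ha₁ hvan₁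
        have hproj₂ : IsProjTo (A 0) w₂u := isProjTo_of_triangle hT₂ ha₂ hvan₂
        obtain ⟨ea₁, _, _⟩ := isProjTo_unique hproj₁ (isProjTo_unit π adj F₁)
        obtain ⟨ea₂, _, _⟩ := isProjTo_unique hproj₂ (isProjTo_unit π adj F₂)
        set iso₁ : a₁ ≅ T.obj₁ := ea₁.symm.trans e₁ with hiso₁
        set iso₂ : a₂ ≅ T.obj₂ := ea₂.symm.trans e₂ with hiso₂
        set abar : a₁ ⟶ a₂ := iso₁.hom ≫ T.mor₁ ≫ iso₂.inv with habar
        have hpost : Function.Bijective (fun g : F₁ ⟶ F₂ => g ≫ w₂u) := by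
          refine postcomp_bij_of_triangle hT₂ (fun s f => ?_)
          exact van_Qs_gen hL hAtop hji (le_refl _) hF₁
            ((isTriangSub_generated _).shift_mem s hgen₂) f
        obtain ⟨g₀, hg₀0⟩ := hpost.surjective (w₁u ≫ abar)
        have hg₀ : g₀ ≫ w₂u = w₁u ≫ abar := hg₀0
        obtain ⟨F₃, m2, m3, hT₃⟩ := distinguished_cocone_triangle g₀
        have hF₃ : F₃ ∈ Qs τ A (j : ℕ) := (Qs_TS hL hAtop hji).cone_mem _ hT₃ hF₁ hF₂
        obtain ⟨Q, q2, q3, hTQ⟩ := distinguished_cocone_triangle abar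
        obtain ⟨u₃, hc₁, hc₂⟩ := complete_distinguished_triangle_morphism
          (Triangle.mk g₀ m2 m3) (Triangle.mk abar q2 q3) hT₃ hTQ w₁u w₂u hg₀
        have hQmem : Q ∈ A 0 := hA0TS.cone_mem _ hTQ ha₁ ha₂
        have hproj₃ : IsProjTo (A 0) u₃ :=
          isProjTo_five hA0TS hT₃ hTQ
            { hom₁ := w₁u, hom₂ := w₂u, hom₃ := u₃,
              comm₁ := hg₀, comm₂ := hc₁, comm₃ := hc₂ } hproj₁ hproj₂ hQmem
        have hcomm : T.mor₁ ≫ iso₂.symm.hom = iso₁.symm.hom ≫ abar := by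
          rw [habar]
          simp
        have eQ : T.obj₃ ≅ Q := Triangle.π₃.mapIso
          (isoTriangleOfIso₁₂ T (Triangle.mk abar q2 q3) hT hTQ iso₁.symm iso₂.symm hcomm)
        obtain ⟨e3, _, _⟩ := isProjTo_unique hproj₃ (isProjTo_unit π adj F₃)
        exact ⟨F₃, hF₃, ⟨e3.trans eQ.symm⟩⟩
    · intro t ht
      have hstart : NatFilt (fun j' => TwA τ A (j' + 0)) k t := twisted_filt hL hAtop t
      obtain ⟨G, u, hproj, hfiltP⟩ := filt_main hL hAtop π adj k 0 (by omega) t hstart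
      obtain ⟨e, _, _⟩ := isProjTo_unique (isProjTo_id ht) hproj
      have hfin : NatFilt (fun j' => projImageSet π (Qs τ A j')) k t := by
        refine natFilt_iso e ?_
        exact hfiltP
      refine hasFiltration_of_natFilt (fun j x hx => ?_) hfin
      show x ∈ projImageSet π (twistSet τ ((j : ℕ) + 1 : ℤ) (primComp A (j : ℕ)))
      rw [hPset]
      exact hx


end Statements
end HPD
end

section
/- Let T be a triangulated category, let D ⊆ T be an admissible full triangulated subcategory with inclusion i : D → T and left adjoint π := i^* : T → D, and let E ⊆ T be a full triangulated subcategory. Assume that for every b ∈ E the cone of the unit morphism b → i(π(b)) of the adjunction π ⊣ i lies in the right orthogonal E^⊥. Then the restriction of π to E is fully faithful: for all a, b ∈ E the map Hom_T(a, b) → Hom_D(π(a), π(b)) induced by π is bijective. -/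
namespace HPD

open CategoryTheory Category Limits Pretriangulated

universe w v u

variable {C : Type u} [Category.{v} C]

section Statements

variable [HasZeroObject C] [Preadditive C] [HasShift C ℤ]
  [∀ n : ℤ, (shiftFunctor C n).Additive] [Pretriangulated C]

/-- let `D` be an admissible subcategory with inclusion `i` and left adjoint
`π`, and let `E` be a full triangulated subcategory.  If for every `b ∈ E` the cone of the
unit morphism `b ⟶ i (π b)` lies in `E^⊥`, then `π` is fully faithful on `E`. -/
theorem statement3 (D : Set C) (hD : IsAdmissible D)
    (π : C ⥤ ObjectProperty.FullSubcategory (· ∈ D))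
    (adj : π ⊣ ObjectProperty.ι (· ∈ D))
    (E : Set C) (hE : IsTriangSub E)
    (hcone : ∀ b ∈ E, ∃ (c : C) (g : (π.obj b).obj ⟶ c) (h : c ⟶ b⟦(1 : ℤ)⟧),
      (Triangle.mk (adj.unit.app b) g h ∈ distTriang C) ∧ c ∈ rightOrth E) :
    ∀ a ∈ E, ∀ b ∈ E, Function.Bijective (fun φ : a ⟶ b => π.map φ) := by
  intro a ha b hb
  obtain ⟨c, g, h, hT, hc⟩ := hcone b hb
  -- key step: composition with the unit is bijective
  have key : Function.Bijective (fun φ : a ⟶ b => φ ≫ adj.unit.app b) := by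
    constructor
    · intro φ₁ φ₂ hφ
      have h0 : (φ₁ - φ₂) ≫ (Triangle.mk (adj.unit.app b) g h).mor₁ = 0 := by
        show (φ₁ - φ₂) ≫ adj.unit.app b = 0
        rw [Preadditive.sub_comp, sub_eq_zero]
        exact hφ
      obtain ⟨w, hw⟩ := Triangle.coyoneda_exact₂ _
        (inv_rot_of_distTriang _ hT) (φ₁ - φ₂) h0
      have hw0 : w = 0 := by
        apply (shiftFunctor C (1 : ℤ)).map_injective
        rw [Functor.map_zero]
        have hz : (shiftFunctor C (1 : ℤ)).map w ≫
            ((shiftEquiv C (1 : ℤ)).counitIso.hom.app c) = 0 :=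
          hc (hE.shift_mem 1 ha) _
        exact (cancel_mono ((shiftEquiv C (1 : ℤ)).counitIso.hom.app c)).mp
          (hz.trans zero_comp.symm)
      rw [hw0, zero_comp] at hw
      exact sub_eq_zero.mp hw
    · intro ψ
      have hψ : ψ ≫ (Triangle.mk (adj.unit.app b) g h).mor₂ = 0 := hc ha _
      obtain ⟨φ, hφ⟩ := Triangle.coyoneda_exact₂ _ hT ψ hψ
      exact ⟨φ, hφ.symm⟩
  have heq : (fun φ : a ⟶ b => π.map φ) =
      (adj.homEquiv a (π.obj b)).symm ∘ (fun φ : a ⟶ b => φ ≫ adj.unit.app b) := by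
    funext φ
    apply (adj.homEquiv a (π.obj b)).injective
    rw [Function.comp_apply, Equiv.apply_symm_apply, Adjunction.homEquiv_unit]
    exact (adj.unit.naturality φ).symm
  rw [heq]
  exact ((adj.homEquiv a (π.obj b)).symm.bijective).comp key

end Statements
end HPD
end

section
/- Let T = ⟨A, B_1, …, B_m⟩ be a semiorthogonal decomposition of a triangulated category T in which A, B_1, …, B_m are all admissible. Then there is a natural isomorphism of endofunctors of T: i_A ∘ i_A^* ≅ L_{B_1} ∘ L_{B_2} ∘ … ∘ L_{B_m}, i.e. the projection onto the first component A (inclusion composed with the left adjoint of the inclusion of A) is computed by the composite of the left mutations through B_1, …, B_m. In particular, when m = 1 and T = ⟨A, B⟩, one has L_B ≅ i_A ∘ i_A^*. -/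
namespace HPD

open CategoryTheory Category Limits Pretriangulated

universe w v u

variable {C : Type u} [Category.{v} C]

section Statements

variable [HasZeroObject C] [Preadditive C] [HasShift C ℤ]
  [∀ n : ℤ, (shiftFunctor C n).Additive] [Pretriangulated C]

section Aux

lemma rightOrth_shift {B : Set C} (hB : ∀ (n : ℤ) ⦃X : C⦄, X ∈ B → (X⟦n⟧ : C) ∈ B)
    {W : C} (hW : W ∈ rightOrth B) (n : ℤ) : (W⟦n⟧ : C) ∈ rightOrth B := by
  intro b hb g
  set e := ((shiftEquiv C n).symm.toAdjunction.homEquiv b W) with he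
  have h0 : e.symm g = 0 := hW (hB (-n) hb) _
  have hg : g = e (e.symm g) := (e.apply_symm_apply g).symm
  rw [hg, h0, he, Adjunction.homEquiv_unit, Functor.map_zero, comp_zero]
  rfl

lemma rightOrth_iso {S : Set C} {W W' : C} (e : W ≅ W') (h : W ∈ rightOrth S) :
    W' ∈ rightOrth S := by
  intro b hb g
  have h1 : g ≫ e.inv = 0 := h hb _
  calc g = (g ≫ e.inv) ≫ e.hom := by simp
  _ = 0 := by rw [h1, zero_comp]

lemma unit_precomp_bij {S : Set C} {p : C ⥤ ObjectProperty.FullSubcategory (· ∈ S)}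
    (adj : p ⊣ ObjectProperty.ι (· ∈ S)) (Z : C) {W : C} (hW : W ∈ S) :
    Function.Bijective (fun g : ((ObjectProperty.ι (· ∈ S)).obj (p.obj Z) ⟶ W) =>
      adj.unit.app Z ≫ g) := by
  have h : (fun g : ((ObjectProperty.ι (· ∈ S)).obj (p.obj Z) ⟶ W) =>
      adj.unit.app Z ≫ g) = fun g => adj.homEquiv Z ⟨W, hW⟩ (ObjectProperty.homMk g) := by
    funext g
    rw [Adjunction.homEquiv_unit]
    rfl
  rw [h]
  exact (adj.homEquiv Z ⟨W, hW⟩).bijective.comp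
    ⟨fun _ _ h => congrArg InducedCategory.Hom.hom h, ObjectProperty.homMk_surjective⟩

lemma counit_postcomp_bij {S : Set C} {ρ : C ⥤ ObjectProperty.FullSubcategory (· ∈ S)}
    (adj : ObjectProperty.ι (· ∈ S) ⊣ ρ) (Z : C) {b : C} (hb : b ∈ S) :
    Function.Bijective (fun g : (b ⟶ (ObjectProperty.ι (· ∈ S)).obj (ρ.obj Z)) =>
      g ≫ adj.counit.app Z) := by
  have h : (fun g : (b ⟶ (ObjectProperty.ι (· ∈ S)).obj (ρ.obj Z)) =>
      g ≫ adj.counit.app Z) = fun g => (adj.homEquiv ⟨b, hb⟩ Z).symm (ObjectProperty.homMk g) := by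
    funext g
    rw [Adjunction.homEquiv_counit]
    rfl
  rw [h]
  exact (adj.homEquiv ⟨b, hb⟩ Z).symm.bijective.comp
    ⟨fun _ _ h => congrArg InducedCategory.Hom.hom h, ObjectProperty.homMk_surjective⟩

lemma precomp_shift_bij {S : Set C} (hS : ∀ (n : ℤ) ⦃W : C⦄, W ∈ S → (W⟦n⟧ : C) ∈ S)
    {Z Y : C} (φ : Z ⟶ Y)
    (hφ : ∀ ⦃W : C⦄, W ∈ S → Function.Bijective (fun g : (Y ⟶ W) => φ ≫ g))
    {W : C} (hW : W ∈ S) :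
    Function.Bijective (fun g : ((Y⟦(1:ℤ)⟧ : C) ⟶ W) => φ⟦(1:ℤ)⟧' ≫ g) := by
  set a := (shiftEquiv C (1:ℤ)).toAdjunction with ha
  have h : (fun g : ((Y⟦(1:ℤ)⟧ : C) ⟶ W) => φ⟦(1:ℤ)⟧' ≫ g)
      = (a.homEquiv Z W).symm ∘ (fun g : (Y ⟶ ((W⟦(-1:ℤ)⟧ : C))) => φ ≫ g) ∘
        (a.homEquiv Y W) := by
    funext g
    show φ⟦(1:ℤ)⟧' ≫ g = (a.homEquiv Z W).symm (φ ≫ a.homEquiv Y W g)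
    erw [← Adjunction.homEquiv_naturality_left, Equiv.symm_apply_apply]
    rfl
  rw [h]
  exact ((a.homEquiv Z W).symm.bijective.comp (hφ (hS (-1) hW))).comp
    (a.homEquiv Y W).bijective

lemma postcomp_shift_bij {B : Set C} (hB : ∀ (n : ℤ) ⦃X : C⦄, X ∈ B → (X⟦n⟧ : C) ∈ B)
    {Y Z : C} (ψ : Y ⟶ Z)
    (hψ : ∀ ⦃b : C⦄, b ∈ B → Function.Bijective (fun g : (b ⟶ Y) => g ≫ ψ))
    {b : C} (hb : b ∈ B) :
    Function.Bijective (fun g : (b ⟶ (Y⟦(1:ℤ)⟧ : C)) => g ≫ ψ⟦(1:ℤ)⟧') := by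
  set a := (shiftEquiv C (1:ℤ)).symm.toAdjunction with ha
  have h : (fun g : (b ⟶ (Y⟦(1:ℤ)⟧ : C)) => g ≫ ψ⟦(1:ℤ)⟧')
      = (a.homEquiv b Z) ∘ (fun g : ((b⟦(-1:ℤ)⟧ : C) ⟶ Y) => g ≫ ψ) ∘
        (a.homEquiv b Y).symm := by
    funext g
    show g ≫ ψ⟦(1:ℤ)⟧' = a.homEquiv b Z ((a.homEquiv b Y).symm g ≫ ψ)
    erw [Adjunction.homEquiv_naturality_right, Equiv.apply_symm_apply]
    rfl
  rw [h]
  exact ((a.homEquiv b Z).bijective.comp (hψ (hB (-1) hb))).comp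
    (a.homEquiv b Y).symm.bijective

lemma cofiber_orth {S : Set C} (hS : ∀ (n : ℤ) ⦃W : C⦄, W ∈ S → (W⟦n⟧ : C) ∈ S)
    {Z Y Cc : C} {u : Z ⟶ Y} {v : Y ⟶ Cc} {w : Cc ⟶ (Z⟦(1:ℤ)⟧ : C)}
    (hT : Triangle.mk u v w ∈ distTriang C)
    (hu : ∀ ⦃W : C⦄, W ∈ S → Function.Bijective (fun g : (Y ⟶ W) => u ≫ g))
    {W : C} (hW : W ∈ S) (f : Cc ⟶ W) : f = 0 := by
  have hvf : v ≫ f = 0 := by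
    apply (hu hW).injective
    show u ≫ v ≫ f = u ≫ 0
    have h12 : u ≫ v = 0 := comp_distTriang_mor_zero₁₂ _ hT
    rw [comp_zero, ← assoc, h12, zero_comp]
  obtain ⟨g, hg⟩ := Triangle.yoneda_exact₃ _ hT f hvf
  obtain ⟨g', hg'⟩ := (precomp_shift_bij hS u hu hW).surjective g
  have hw : w ≫ u⟦(1:ℤ)⟧' = 0 := by
    have h2 := comp_distTriang_mor_zero₂₃ _ (rot_of_distTriang _ hT)
    simp at h2
    erw [Preadditive.comp_neg, neg_eq_zero] at h2
    exact h2
  rw [hg, ← hg']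
  dsimp only [Triangle.mk]
  rw [← assoc]
  show (w ≫ (shiftFunctor C (1:ℤ)).map u) ≫ g' = 0
  rw [hw, zero_comp]

lemma exists_retract {B : Set C}
    (hBsh : ∀ (n : ℤ) ⦃X : C⦄, X ∈ B → (X⟦n⟧ : C) ∈ B)
    {β Cc : C} (hβ : β ∈ B) (ε : β ⟶ Cc)
    (hε : ∀ ⦃b : C⦄, b ∈ B → Function.Bijective (fun g : (b ⟶ β) => g ≫ ε))
    (hCc : ∀ ⦃W : C⦄, W ∈ rightOrth B → ∀ f : Cc ⟶ W, f = 0) :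
    ∃ r : Cc ⟶ β, r ≫ ε = 𝟙 Cc := by
  obtain ⟨D, v2, w2, hT2⟩ := Pretriangulated.distinguished_cocone_triangle ε
  have hD : D ∈ rightOrth B := by
    intro b hb q
    have hqw : q ≫ w2 = 0 := by
      apply (postcomp_shift_bij hBsh ε hε hb).injective
      show (q ≫ w2) ≫ ε⟦(1:ℤ)⟧' = (0 : b ⟶ _) ≫ _
      have h2 := comp_distTriang_mor_zero₂₃ _ (rot_of_distTriang _ hT2)
      rw [zero_comp, assoc, show w2 ≫ ε⟦(1:ℤ)⟧' = 0 by simp at h2; erw [Preadditive.comp_neg, neg_eq_zero] at h2; exact h2, comp_zero]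
    obtain ⟨q', hq'⟩ := Triangle.coyoneda_exact₃ _ hT2 q hqw
    obtain ⟨q'', hq''⟩ := (hε hb).surjective q'
    rw [hq', ← hq'']
    dsimp only [Triangle.mk]
    rw [assoc]
    have h12 : ε ≫ v2 = 0 := comp_distTriang_mor_zero₁₂ _ hT2
    show q'' ≫ ε ≫ v2 = 0
    rw [h12, comp_zero]
  have hv2 : v2 = 0 := hCc hD v2
  obtain ⟨r, hr⟩ := Triangle.coyoneda_exact₂ _ hT2 (𝟙 Cc) (by erw [id_comp]; exact hv2)
  exact ⟨r, hr.symm⟩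

lemma mutation_obj_mem_rightOrth {B B' : Set C}
    (hBsh : ∀ (n : ℤ) ⦃X : C⦄, X ∈ B → (X⟦n⟧ : C) ∈ B)
    (hBla : (ObjectProperty.ι (· ∈ B)).IsLeftAdjoint)
    {p : C ⥤ ObjectProperty.FullSubcategory (· ∈ rightOrth B)}
    (adj : p ⊣ ObjectProperty.ι (· ∈ rightOrth B))
    (horth : HomOrth B' B) {Z : C} (hZ : Z ∈ rightOrth B') :
    ((ObjectProperty.ι (· ∈ rightOrth B)).obj (p.obj Z)) ∈ rightOrth B' := by
  have hu : ∀ ⦃W : C⦄, W ∈ rightOrth B →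
      Function.Bijective (fun g :
        ((ObjectProperty.ι (· ∈ rightOrth B)).obj (p.obj Z) ⟶ W) =>
          adj.unit.app Z ≫ g) := fun W hW => unit_precomp_bij adj Z hW
  have hSsh : ∀ (n : ℤ) ⦃W : C⦄, W ∈ rightOrth B → (W⟦n⟧ : C) ∈ rightOrth B :=
    fun n W hW => rightOrth_shift hBsh hW n
  obtain ⟨Cc, v, w, hT⟩ := Pretriangulated.distinguished_cocone_triangle (adj.unit.app Z)
  have hCc : ∀ ⦃W : C⦄, W ∈ rightOrth B → ∀ f : Cc ⟶ W, f = 0 :=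
    fun W hW f => cofiber_orth hSsh hT hu hW f
  obtain ⟨ρ, ⟨adjρ⟩⟩ := hBla.exists_rightAdjoint
  obtain ⟨r, hr⟩ := exists_retract hBsh (ρ.obj Cc).property (adjρ.counit.app Cc)
      (fun b hb => counit_postcomp_bij adjρ Cc hb) hCc
  intro b hb f
  have hfv : f ≫ v = 0 := by
    have hfvr : (f ≫ v) ≫ r = 0 := horth hb (ρ.obj Cc).property _
    calc f ≫ v = (f ≫ v) ≫ r ≫ adjρ.counit.app Cc := by rw [hr]; simp
    _ = ((f ≫ v) ≫ r) ≫ adjρ.counit.app Cc := by simp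
    _ = 0 := by rw [hfvr, zero_comp]
  obtain ⟨g, hg⟩ := Triangle.coyoneda_exact₂ _ hT f hfv
  have hg0 : g = 0 := hZ hb g
  rw [hg, hg0]
  simp
  exact zero_comp

lemma mem_first_of_orth {m : ℕ} {A : Set C} {B : Fin m → Set C}
    (hsod : IsSOD (Fin.cons A B : Fin (m + 1) → Set C)) {X : C}
    (hX : ∀ j : Fin m, X ∈ rightOrth (B j)) : X ∈ A := by
  have hBtri : ∀ j : Fin m, IsTriangSub (B j) := by
    intro j
    have h := hsod.triangSub j.succ
    rwa [Fin.cons_succ] at h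
  have hAtri : IsTriangSub A := by
    have h := hsod.triangSub 0
    rwa [Fin.cons_zero] at h
  have hAsub : ∀ ⦃a : C⦄, a ∈ A → ∀ j : Fin m, a ∈ rightOrth (B j) := by
    intro a ha j b hb g
    have h := hsod.semiorth (show (0 : Fin (m + 1)) < j.succ from j.succ_pos)
    rw [Fin.cons_succ, Fin.cons_zero] at h
    exact h hb ha g
  obtain ⟨F, f, hlast, h0X, hcone⟩ := hsod.filt X
  have key : ∀ (d : ℕ) (k : Fin (m + 2)), (k : ℕ) + d = m + 1 → 1 ≤ (k : ℕ) →
      ∀ ⦃W : C⦄, (∀ j : Fin m, W ∈ rightOrth (B j)) → ∀ u : F k ⟶ W, u = 0 := by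
    intro d
    induction d with
    | zero =>
      intro k hk _ W _ u
      have hkl : k = Fin.last (m + 1) := by
        apply Fin.ext
        simpa [Fin.val_last] using hk
      subst hkl
      exact hlast.eq_of_src u 0
    | succ d ih =>
      intro k hk hk1 W hW
      have hk2 : (k : ℕ) - 1 < m := by omega
      have hcs : ((⟨(k : ℕ) - 1, hk2⟩ : Fin m).succ).castSucc = k := by
        apply Fin.ext
        simp only [Fin.coe_castSucc, Fin.val_succ]
        omega
      obtain ⟨a, g, h, hT, ha⟩ := hcone (⟨(k : ℕ) - 1, hk2⟩ : Fin m).succ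
      rw [← hcs]
      intro u
      have hmem_a : a ∈ B ⟨(k : ℕ) - 1, hk2⟩ := by
        rwa [Fin.cons_succ] at ha
      have h1 : f (⟨(k : ℕ) - 1, hk2⟩ : Fin m).succ ≫ u = 0 := by
        apply ih (((⟨(k : ℕ) - 1, hk2⟩ : Fin m).succ : Fin (m + 1)).succ) ?_ ?_ hW
        · simp only [Fin.val_succ]
          omega
        · simp only [Fin.val_succ]
          omega
      obtain ⟨u', hu'⟩ := Triangle.yoneda_exact₂ _ hT u h1
      erw [hu', hW _ hmem_a u', comp_zero]
      rfl
  obtain ⟨a0, g0, h0', hT0, ha0⟩ := hcone 0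
  have ha0A : a0 ∈ A := by rwa [Fin.cons_zero] at ha0
  have hc : F ((0 : Fin (m + 1)).castSucc) = X := by
    rw [Fin.castSucc_zero, h0X]
  have hQ0 : ∀ j : Fin m, F ((0 : Fin (m + 1)).castSucc) ∈ rightOrth (B j) := by
    intro j
    rw [hc]
    exact hX j
  have hf0 : f 0 = 0 :=
    key m ((0 : Fin (m + 1)).succ : Fin (m + 2))
      (by simp only [Fin.val_succ, Fin.val_zero]; omega)
      (by simp only [Fin.val_succ, Fin.val_zero]; omega) hQ0 (f 0)
  have hz1 : IsZero (F ((0 : Fin (m + 1)).succ)) := by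
    rw [Limits.IsZero.iff_id_eq_zero]
    obtain ⟨q, hq⟩ := Triangle.coyoneda_exact₂ _
      (inv_rot_of_distTriang _ hT0) (𝟙 (F ((0 : Fin (m + 1)).succ)))
      (by dsimp; erw [id_comp]; exact hf0)
    have hQ1 : ∀ j : Fin m, (a0⟦(-1 : ℤ)⟧ : C) ∈ rightOrth (B j) := by
      intro j
      exact rightOrth_shift (fun n X' hX' => (hBtri j).shift_mem n hX')
        (hAsub ha0A j) (-1)
    have hq0 : q = 0 :=
      key m ((0 : Fin (m + 1)).succ : Fin (m + 2))
        (by simp only [Fin.val_succ, Fin.val_zero]; omega)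
        (by simp only [Fin.val_succ, Fin.val_zero]; omega) hQ1 q
    rw [hq, hq0, zero_comp]
    rfl
  have hiso : IsIso (Triangle.mk (f 0) g0 h0').mor₂ :=
    (Triangle.isZero₁_iff_isIso₂ _ hT0).1 hz1
  have hmemF : F ((0 : Fin (m + 1)).castSucc) ∈ A :=
    hAtri.iso_mem (asIso (Triangle.mk (f 0) g0 h0').mor₂).symm ha0A
  rwa [hc] at hmemF

lemma main_ind : ∀ (m : ℕ) (B : Fin m → Set C) (_ : ∀ j, IsAdmissible (B j))
    (_ : ∀ ⦃l k : Fin m⦄, l < k → HomOrth (B k) (B l))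
    (L : Fin m → (C ⥤ C)) (_ : ∀ j, IsLeftMutation (B j) (L j)),
    ∃ θ : (𝟭 C) ⟶ compFam L,
      (∀ (X : C) (j : Fin m), (compFam L).obj X ∈ rightOrth (B j)) ∧
      (∀ (X : C) ⦃W : C⦄, (∀ j : Fin m, W ∈ rightOrth (B j)) →
        Function.Bijective (fun g : ((compFam L).obj X ⟶ W) => θ.app X ≫ g)) := by
  intro m
  induction m with
  | zero =>
    intro B hB hso L hL
    refine ⟨𝟙 (𝟭 C), fun X j => j.elim0, fun X W hW => ?_⟩
    have h : (fun g : ((compFam L).obj X ⟶ W) => (𝟙 (𝟭 C) : 𝟭 C ⟶ 𝟭 C).app X ≫ g) = id := by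
      funext g
      simp
      exact id_comp g
    refine (congrArg Function.Bijective h).mpr ?_
    exact Function.bijective_id
  | succ m ih =>
    intro B hB hso L hL
    obtain ⟨θt, hmemt, hbijt⟩ := ih (fun j => B j.succ) (fun j => hB j.succ)
      (fun l k hlk => hso (Fin.succ_lt_succ_iff.mpr hlk)) (fun j => L j.succ)
      (fun j => hL j.succ)
    obtain ⟨p0, ⟨adj0⟩, ⟨e0⟩⟩ := hL 0
    refine ⟨θt ≫ (compFam fun j => L j.succ).rightUnitor.inv ≫
      Functor.whiskerLeft (compFam fun j => L j.succ) (adj0.unit ≫ e0.inv), ?_, ?_⟩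
    · intro X j
      have hY : ((ObjectProperty.ι (· ∈ rightOrth (B 0))).obj
          (p0.obj ((compFam fun j => L j.succ).obj X))) ∈ rightOrth (B j) := by
        induction j using Fin.cases with
        | zero => exact (p0.obj ((compFam fun j => L j.succ).obj X)).property
        | succ i =>
          exact mutation_obj_mem_rightOrth
            (fun n X' hX' => (hB 0).1.shift_mem n hX') (hB 0).2.2 adj0
            (hso (Fin.succ_pos i)) (hmemt X i)
      exact rightOrth_iso
        (e0.app ((compFam fun j => L j.succ).obj X)).symm hY
    · intro X W hW
      have h1 := hbijt X (fun j => hW j.succ)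
      have h2 := unit_precomp_bij adj0 ((compFam fun j => L j.succ).obj X) (hW 0)
      have h3 : Function.Bijective
          (fun g : ((L 0).obj ((compFam fun j => L j.succ).obj X) ⟶ W) =>
            e0.inv.app ((compFam fun j => L j.succ).obj X) ≫ g) := by
        constructor
        · intro g₁ g₂ hg
          have := congrArg (fun t => e0.hom.app ((compFam fun j => L j.succ).obj X) ≫ t) hg
          simpa using this
        · intro g
          exact ⟨e0.hom.app ((compFam fun j => L j.succ).obj X) ≫ g, by simp⟩
      have hfun : (fun g : ((compFam L).obj X ⟶ W) =>
          (θt ≫ (compFam fun j => L j.succ).rightUnitor.inv ≫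
            Functor.whiskerLeft (compFam fun j => L j.succ) (adj0.unit ≫ e0.inv)).app X ≫ g)
          = (fun g : ((compFam fun j => L j.succ).obj X ⟶ W) => θt.app X ≫ g) ∘
            (fun g : ((ObjectProperty.ι (· ∈ rightOrth (B 0))).obj
                (p0.obj ((compFam fun j => L j.succ).obj X)) ⟶ W) =>
              adj0.unit.app ((compFam fun j => L j.succ).obj X) ≫ g) ∘
            (fun g : ((L 0).obj ((compFam fun j => L j.succ).obj X) ⟶ W) =>
              e0.inv.app ((compFam fun j => L j.succ).obj X) ≫ g) := by
        funext g
        simp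
        exact (assoc _ _ _).trans (congrArg _ (assoc _ _ _))
      refine (congrArg Function.Bijective hfun).mpr ?_
      exact (h1.comp h2).comp h3

end Aux

/-- for a semiorthogonal decomposition `T = ⟨A, B 0, …, B (m-1)⟩` with all
components admissible, the projection `i_A ∘ i_A^*` onto the first component is naturally
isomorphic to the composition `L_{B 0} ∘ L_{B 1} ∘ ⋯ ∘ L_{B (m-1)}` of left mutations. -/
theorem statement4 {m : ℕ} (A : Set C) (B : Fin m → Set C)
    (hsod : IsSOD (Fin.cons A B : Fin (m + 1) → Set C))
    (hA : IsAdmissible A) (hB : ∀ j, IsAdmissible (B j))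
    (πA : C ⥤ ObjectProperty.FullSubcategory (· ∈ A))
    (adjA : πA ⊣ ObjectProperty.ι (· ∈ A))
    (L : Fin m → (C ⥤ C)) (hL : ∀ j, IsLeftMutation (B j) (L j)) :
    Nonempty ((πA ⋙ ObjectProperty.ι (· ∈ A)) ≅ compFam L) := by
  have hso' : ∀ ⦃l k : Fin m⦄, l < k → HomOrth (B k) (B l) := by
    intro l k hlk
    have h := hsod.semiorth (show l.succ < k.succ from Fin.succ_lt_succ_iff.mpr hlk)
    rwa [Fin.cons_succ, Fin.cons_succ] at h
  obtain ⟨θ, hmem, hbij⟩ := main_ind m B hB hso' L hL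
  have hAsub : ∀ ⦃a : C⦄, a ∈ A → ∀ j : Fin m, a ∈ rightOrth (B j) := by
    intro a ha j b hb g
    have h := hsod.semiorth (show (0 : Fin (m + 1)) < j.succ from j.succ_pos)
    rw [Fin.cons_succ, Fin.cons_zero] at h
    exact h hb ha g
  have hMA : ∀ X : C, (compFam L).obj X ∈ A :=
    fun X => mem_first_of_orth hsod (fun j => hmem X j)
  have hPA : ∀ Z : C, (πA ⋙ ObjectProperty.ι (· ∈ A)).obj Z ∈ A :=
    fun Z => (πA.obj Z).property
  have hu : ∀ (Z : C) ⦃W : C⦄, W ∈ A → Function.Bijective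
      (fun g : ((πA ⋙ ObjectProperty.ι (· ∈ A)).obj Z ⟶ W) =>
        adjA.unit.app Z ≫ g) :=
    fun Z W hW => unit_precomp_bij adjA Z hW
  have hφ : ∀ X : C, ∃ φ : (πA ⋙ ObjectProperty.ι (· ∈ A)).obj X ⟶
      (compFam L).obj X, adjA.unit.app X ≫ φ = θ.app X :=
    fun X => (hu X (hMA X)).surjective (θ.app X)
  have hψ : ∀ X : C, ∃ ψ : (compFam L).obj X ⟶
      (πA ⋙ ObjectProperty.ι (· ∈ A)).obj X, θ.app X ≫ ψ = adjA.unit.app X :=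
    fun X => (hbij X (hAsub (hPA X))).surjective (adjA.unit.app X)
  choose φ hφ using hφ
  choose ψ hψ using hψ
  have hinv1 : ∀ X : C, φ X ≫ ψ X = 𝟙 _ := by
    intro X
    apply (hu X (hPA X)).injective
    show adjA.unit.app X ≫ φ X ≫ ψ X = adjA.unit.app X ≫ 𝟙 _
    rw [comp_id, ← assoc, hφ, hψ]
  have hinv2 : ∀ X : C, ψ X ≫ φ X = 𝟙 _ := by
    intro X
    apply (hbij X (hAsub (hMA X))).injective
    show θ.app X ≫ ψ X ≫ φ X = θ.app X ≫ 𝟙 _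
    rw [comp_id, ← assoc, hψ, hφ]
  refine ⟨NatIso.ofComponents (fun X => ⟨φ X, ψ X, hinv1 X, hinv2 X⟩) ?_⟩
  intro X Y g
  show (πA ⋙ ObjectProperty.ι (· ∈ A)).map g ≫ φ Y = φ X ≫ (compFam L).map g
  apply (hu X (hMA Y)).injective
  show adjA.unit.app X ≫ (πA ⋙ ObjectProperty.ι (· ∈ A)).map g ≫ φ Y
      = adjA.unit.app X ≫ φ X ≫ (compFam L).map g
  have hnatu : adjA.unit.app X ≫ (πA ⋙ ObjectProperty.ι (· ∈ A)).map g
      = g ≫ adjA.unit.app Y := (adjA.unit.naturality g).symm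
  have hnatθ : θ.app X ≫ (compFam L).map g = g ≫ θ.app Y := (θ.naturality g).symm
  rw [← assoc, hnatu, assoc, hφ, ← assoc, hφ, hnatθ]


end Statements
end HPD
end

section
/- Let A be an admissible full triangulated subcategory of a triangulated category T and let L_A be the left mutation functor through A. Then: (i) L_A sends every object of A to a zero object; (ii) the restriction of L_A to the left orthogonal ^⊥A defines an equivalence of triangulated categories ^⊥A ≃ A^⊥; (iii) the restriction of L_A to A^⊥ is naturally isomorphic to the inclusion functor A^⊥ → T. -/
namespace HPD

open CategoryTheory Category Limits Pretriangulated

universe w v u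

variable {C : Type u} [Category.{v} C]

section Statements

variable [HasZeroObject C] [Preadditive C] [HasShift C ℤ]
  [∀ n : ℤ, (shiftFunctor C n).Additive] [Pretriangulated C]

section Aux

lemma leftOrth_apply {A : Set C} {X : C} (hX : X ∈ leftOrth A) {Y : C} (hY : Y ∈ A)
    (f : X ⟶ Y) : f = 0 := hX hY f

lemma rightOrth_apply {A : Set C} {Y : C} (hY : Y ∈ rightOrth A) {X : C} (hX : X ∈ A)
    (f : X ⟶ Y) : f = 0 := hY hX f

lemma mem_leftOrth {A : Set C} {X : C} (h : ∀ ⦃Y : C⦄, Y ∈ A → ∀ f : X ⟶ Y, f = 0) :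
    X ∈ leftOrth A := h

lemma mem_rightOrth {A : Set C} {Y : C} (h : ∀ ⦃X : C⦄, X ∈ A → ∀ f : X ⟶ Y, f = 0) :
    Y ∈ rightOrth A := h

/-- Bijectivity of precomposition with the unit of an adjunction into a full subcategory. -/
lemma unit_bij {Z : Set C} {p : C ⥤ ObjectProperty.FullSubcategory (· ∈ Z)}
    (adj : p ⊣ ObjectProperty.ι (· ∈ Z)) (X : C) :
    ∀ y ∈ Z, Function.Bijective
      (fun u : (p ⋙ ObjectProperty.ι (· ∈ Z)).obj X ⟶ y => adj.unit.app X ≫ u) := by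
  intro y hy
  constructor
  · intro u₁ u₂ h12
    have h1 : adj.homEquiv X ⟨y, hy⟩ (ObjectProperty.homMk u₁) = adj.homEquiv X ⟨y, hy⟩ (ObjectProperty.homMk u₂) := by
      rw [Adjunction.homEquiv_unit, Adjunction.homEquiv_unit]
      exact h12
    exact congrArg (·.hom) ((adj.homEquiv X ⟨y, hy⟩).injective h1)
  · intro v
    refine ⟨((adj.homEquiv X ⟨y, hy⟩).symm v).hom, ?_⟩
    have h2 := (adj.homEquiv X ⟨y, hy⟩).apply_symm_apply v
    rw [Adjunction.homEquiv_unit] at h2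
    exact h2

/-- Bijectivity of postcomposition with the counit of an adjunction from a full subcategory. -/
lemma counit_bij {Z : Set C} {r : C ⥤ ObjectProperty.FullSubcategory (· ∈ Z)}
    (adj : ObjectProperty.ι (· ∈ Z) ⊣ r) (X : C) :
    ∀ x ∈ Z, Function.Bijective
      (fun u : x ⟶ (r ⋙ ObjectProperty.ι (· ∈ Z)).obj X => u ≫ adj.counit.app X) := by
  intro x hx
  constructor
  · intro u₁ u₂ h12
    have h1 : (adj.homEquiv ⟨x, hx⟩ X).symm (ObjectProperty.homMk u₁) = (adj.homEquiv ⟨x, hx⟩ X).symm (ObjectProperty.homMk u₂) := by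
      rw [Adjunction.homEquiv_counit, Adjunction.homEquiv_counit]
      exact h12
    exact congrArg (·.hom) ((adj.homEquiv ⟨x, hx⟩ X).symm.injective h1)
  · intro v
    refine ⟨(adj.homEquiv ⟨x, hx⟩ X v).hom, ?_⟩
    have h2 := (adj.homEquiv ⟨x, hx⟩ X).symm_apply_apply v
    rw [Adjunction.homEquiv_counit] at h2
    exact h2

lemma shift_precomp_bij {W Z : C} (θ : W ⟶ Z) (n : ℤ) (y : C)
    (hb : Function.Bijective (fun u : Z ⟶ (y⟦(-n : ℤ)⟧ : C) => θ ≫ u)) :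
    Function.Bijective (fun g : (Z⟦n⟧ : C) ⟶ y => θ⟦n⟧' ≫ g) := by
  have adjn := (shiftEquiv C n).toAdjunction
  have key : ∀ g : (Z⟦n⟧ : C) ⟶ y, (shiftFunctor C n).map θ ≫ g
      = (adjn.homEquiv W y).symm (θ ≫ (adjn.homEquiv Z y) g) := by
    intro g
    exact (Equiv.eq_symm_apply _).2 (adjn.homEquiv_naturality_left θ g)
  have heq : (fun g : (Z⟦n⟧ : C) ⟶ y => (shiftFunctor C n).map θ ≫ g)
      = ((adjn.homEquiv W y).symm ∘ (fun u : Z ⟶ (y⟦(-n : ℤ)⟧ : C) => θ ≫ u))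
        ∘ (adjn.homEquiv Z y) := funext key
  rw [heq]
  exact ((adjn.homEquiv W y).symm.bijective.comp hb).comp (adjn.homEquiv Z y).bijective

lemma shift_postcomp_bij {W Z : C} (θ : W ⟶ Z) (n : ℤ) (x : C)
    (hb : Function.Bijective (fun u : (x⟦(-n : ℤ)⟧ : C) ⟶ W => u ≫ θ)) :
    Function.Bijective (fun g : x ⟶ (W⟦n⟧ : C) => g ≫ θ⟦n⟧') := by
  have adjn := (shiftEquiv' C (-n) n (by omega)).toAdjunction
  have key : ∀ u : (x⟦(-n : ℤ)⟧ : C) ⟶ W,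
      (adjn.homEquiv x Z) (u ≫ θ) = (adjn.homEquiv x W) u ≫ (shiftFunctor C n).map θ := by
    intro u
    exact adjn.homEquiv_naturality_right u θ
  have heq : (fun g : x ⟶ (W⟦n⟧ : C) => g ≫ (shiftFunctor C n).map θ)
      = ((adjn.homEquiv x Z) ∘ (fun u : (x⟦(-n : ℤ)⟧ : C) ⟶ W => u ≫ θ))
        ∘ (adjn.homEquiv x W).symm := by
    funext g
    show g ≫ (shiftFunctor C n).map θ
      = (adjn.homEquiv x Z) ((adjn.homEquiv x W).symm g ≫ θ)
    exact ((key _).trans (congrArg (· ≫ (shiftFunctor C n).map θ) ((adjn.homEquiv x W).apply_symm_apply g))).symm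
  rw [heq]
  exact ((adjn.homEquiv x Z).bijective.comp hb).comp (adjn.homEquiv x W).symm.bijective

/-- Cone chase: if precomposition by `θ` into every object of `P` is bijective
(`P` being shift-closed), then any cone of `θ` is left-orthogonal to `P`. -/
lemma cone_orth {W Z c : C} {θ : W ⟶ Z} {g : Z ⟶ c} {h : c ⟶ (W⟦(1 : ℤ)⟧ : C)}
    (hT : Triangle.mk θ g h ∈ distTriang C) (P : Set C)
    (hP : ∀ y ∈ P, ∀ n : ℤ, (y⟦n⟧ : C) ∈ P)
    (hbij : ∀ y ∈ P, Function.Bijective (fun u : Z ⟶ y => θ ≫ u)) :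
    ∀ y ∈ P, ∀ f : c ⟶ y, f = 0 := by
  intro y hy f
  have h0 : θ ≫ g = 0 := comp_distTriang_mor_zero₁₂ _ hT
  have h2 : g ≫ f = 0 := by
    apply (hbij y hy).injective
    show θ ≫ g ≫ f = θ ≫ 0
    rw [← assoc, h0, zero_comp, comp_zero]
  obtain ⟨u, hu⟩ := Triangle.yoneda_exact₃ _ hT f h2
  have hu' : f = h ≫ u := hu
  obtain ⟨v, hv⟩ := (shift_precomp_bij θ 1 y (hbij _ (hP y hy (-1)))).surjective u
  have hv' : (shiftFunctor C (1 : ℤ)).map θ ≫ v = u := hv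
  have h31 : h ≫ (shiftFunctor C (1 : ℤ)).map θ = 0 := comp_distTriang_mor_zero₃₁ _ hT
  rw [hu', ← hv', ← assoc, h31, zero_comp]

/-- Dual cone chase. -/
lemma cone_orth' {W Z c : C} {θ : W ⟶ Z} {g : Z ⟶ c} {h : c ⟶ (W⟦(1 : ℤ)⟧ : C)}
    (hT : Triangle.mk θ g h ∈ distTriang C) (Q : Set C)
    (hQ : ∀ x ∈ Q, ∀ n : ℤ, (x⟦n⟧ : C) ∈ Q)
    (hbij : ∀ x ∈ Q, Function.Bijective (fun u : x ⟶ W => u ≫ θ)) :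
    ∀ x ∈ Q, ∀ f : x ⟶ c, f = 0 := by
  intro x hx f
  have h31 : h ≫ (shiftFunctor C (1 : ℤ)).map θ = 0 := comp_distTriang_mor_zero₃₁ _ hT
  have h1 : f ≫ h = 0 := by
    apply (shift_postcomp_bij θ 1 x (hbij _ (hQ x hx (-1)))).injective
    show (f ≫ h) ≫ (shiftFunctor C (1 : ℤ)).map θ = (0 : x ⟶ (W⟦(1 : ℤ)⟧ : C)) ≫ _
    rw [assoc, h31, comp_zero, zero_comp]
  obtain ⟨v, hv⟩ := Triangle.coyoneda_exact₃ _ hT f h1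
  have hv' : f = v ≫ g := hv
  obtain ⟨w, hw⟩ := (hbij x hx).surjective v
  have hw' : w ≫ θ = v := hw
  have h0 : θ ≫ g = 0 := comp_distTriang_mor_zero₁₂ _ hT
  rw [hv', ← hw']; exact (assoc w θ g).trans (by rw [h0, comp_zero])

/-- The fiber of a "unit-like" morphism lies in the left orthogonal. -/
lemma fiber_mem {W Z : C} (θ : W ⟶ Z) (P : Set C)
    (hP : ∀ y ∈ P, ∀ n : ℤ, (y⟦n⟧ : C) ∈ P)
    (hbij : ∀ y ∈ P, Function.Bijective (fun u : Z ⟶ y => θ ≫ u)) :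
    ∃ (a : C) (m : a ⟶ W) (h' : Z ⟶ (a⟦(1 : ℤ)⟧ : C)),
      a ∈ leftOrth P ∧ Triangle.mk m θ h' ∈ distTriang C := by
  obtain ⟨c, g, h, hT⟩ := distinguished_cocone_triangle θ
  have hc := cone_orth hT P hP hbij
  refine ⟨(c⟦(-1 : ℤ)⟧ : C), (Triangle.mk θ g h).invRotate.mor₁,
    (Triangle.mk θ g h).invRotate.mor₃, ?_, inv_rot_of_distTriang _ hT⟩
  intro y hy f
  have h1 : (shiftFunctorCompIsoId C (-1 : ℤ) (1 : ℤ) (by omega)).inv.app c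
      ≫ (shiftFunctor C (1 : ℤ)).map f = 0 := hc _ (hP y hy 1) _
  have h2 : (shiftFunctor C (1 : ℤ)).map f = 0 := by
    rw [← cancel_epi ((shiftFunctorCompIsoId C (-1 : ℤ) (1 : ℤ) (by omega)).inv.app c),
      comp_zero]
    exact h1
  apply (shiftFunctor C (1 : ℤ)).map_injective
  rw [h2, Functor.map_zero]

/-- For an admissible subcategory, `^⊥(A^⊥) ⊆ A`. -/
lemma leftOrth_rightOrth_subset (A : Set C) (hA : IsAdmissible A) :
    leftOrth (rightOrth A) ⊆ A := by
  obtain ⟨r, ⟨adjr⟩⟩ := hA.2.2.exists_rightAdjoint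
  intro z hz
  obtain ⟨c', g, h, hT⟩ := distinguished_cocone_triangle (adjr.counit.app z)
  have hAshift : ∀ x ∈ A, ∀ n : ℤ, (x⟦n⟧ : C) ∈ A := fun x hx n => hA.1.shift_mem n hx
  have hc' : ∀ x ∈ A, ∀ f : x ⟶ c', f = 0 := cone_orth' hT A hAshift (counit_bij adjr z)
  have hc'' : c' ∈ rightOrth A := mem_rightOrth (fun x hx f => hc' x hx f)
  have hg : g = 0 := leftOrth_apply hz hc'' g
  have hid : 𝟙 c' = 0 := by
    obtain ⟨u, hu⟩ := Triangle.yoneda_exact₃ _ hT (𝟙 c') (by show g ≫ 𝟙 c' = 0; rw [comp_id]; exact hg)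
    have hu0 : u = 0 := rightOrth_apply hc'' (hAshift _ (r.obj z).property 1) u
    rw [hu, hu0, comp_zero]; rfl
  have hz0 : IsZero c' := (IsZero.iff_id_eq_zero c').2 hid
  have : IsIso (adjr.counit.app z) := (Triangle.isZero₃_iff_isIso₁ _ hT).1 hz0
  exact hA.1.iso_mem (asIso (adjr.counit.app z)) (r.obj z).property

end Aux

/-- letting `p ⊣ i_{A^⊥}` exhibit the left mutation `L_A = i_{A^⊥} ∘ p`
through an admissible subcategory `A`, one has: (i) `L_A` kills the objects of `A`;
(ii) the restriction of `L_A` to `^⊥A`, i.e. the functor `i_{^⊥A} ⋙ p`, is an equivalence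
`^⊥A ≌ A^⊥`; (iii) the restriction of `L_A` to `A^⊥` is naturally isomorphic to the
inclusion `A^⊥ ⥤ T`. -/
theorem statement6 (A : Set C) (hA : IsAdmissible A)
    (p : C ⥤ ObjectProperty.FullSubcategory (· ∈ rightOrth A))
    (adj : p ⊣ ObjectProperty.ι (· ∈ rightOrth A)) :
    (∀ a ∈ A, IsZero ((p.obj a).obj)) ∧
    (ObjectProperty.ι (· ∈ leftOrth A) ⋙ p).IsEquivalence ∧
    Nonempty ((ObjectProperty.ι (· ∈ rightOrth A) ⋙
        (p ⋙ ObjectProperty.ι (· ∈ rightOrth A))) ≅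
      ObjectProperty.ι (· ∈ rightOrth A)) := by
  -- Part (i)
  have part1 : ∀ a ∈ A, IsZero ((p.obj a).obj) := by
    intro a ha
    rw [IsZero.iff_id_eq_zero]
    have h1 : adj.homEquiv a (p.obj a) (𝟙 (p.obj a))
        = adj.homEquiv a (p.obj a)
          (ObjectProperty.homMk (0 : (p.obj a).obj ⟶ (p.obj a).obj)) :=
      (rightOrth_apply (p.obj a).property ha _).trans
        (rightOrth_apply (p.obj a).property ha _).symm
    exact congrArg (·.hom) ((adj.homEquiv a (p.obj a)).injective h1)
  -- shift-closure facts
  have hAshift : ∀ x ∈ A, ∀ n : ℤ, (x⟦n⟧ : C) ∈ A := fun x hx n => hA.1.shift_mem n hx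
  have hPr : ∀ y ∈ rightOrth A, ∀ n : ℤ, (y⟦n⟧ : C) ∈ rightOrth A := by
    intro y hy n
    apply mem_rightOrth
    intro x hx f
    have h0 : (shiftFunctor C (-n)).map f
        ≫ (shiftFunctorCompIsoId C n (-n) (by omega)).hom.app y = 0 :=
      rightOrth_apply hy (hAshift x hx (-n)) _
    have h1 : (shiftFunctor C (-n)).map f = 0 := by
      rw [← cancel_mono ((shiftFunctorCompIsoId C n (-n) (by omega)).hom.app y), zero_comp]
      exact h0
    apply (shiftFunctor C (-n)).map_injective
    rw [h1, Functor.map_zero]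
  -- unit cones lie in A
  have unitTri : ∀ W : C, ∃ (a : C) (m : a ⟶ W)
      (h' : (p ⋙ ObjectProperty.ι (· ∈ rightOrth A)).obj W ⟶ (a⟦(1 : ℤ)⟧ : C)),
      a ∈ A ∧ Triangle.mk m (adj.unit.app W) h' ∈ distTriang C := by
    intro W
    obtain ⟨a, m, h', haa, hT⟩ := fiber_mem (adj.unit.app W) (rightOrth A) hPr (unit_bij adj W)
    exact ⟨a, m, h', leftOrth_rightOrth_subset A hA haa, hT⟩
  -- precomposition with the unit is bijective on maps from `^⊥A`
  have precomp_bij : ∀ (X : C), X ∈ leftOrth A → ∀ (W : C),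
      Function.Bijective (fun f : X ⟶ W => f ≫ adj.unit.app W) := by
    intro X hX W
    obtain ⟨a, m, h', ha, hT⟩ := unitTri W
    constructor
    · intro f₁ f₂ h12
      have hsub : (f₁ - f₂) ≫ adj.unit.app W = 0 := by
        rw [Preadditive.sub_comp]
        rw [show f₁ ≫ adj.unit.app W = f₂ ≫ adj.unit.app W from h12, sub_self]
      obtain ⟨u, hu⟩ := Triangle.coyoneda_exact₂ _ hT (f₁ - f₂) hsub
      have hu0 : u = 0 := leftOrth_apply hX ha u
      have hzero : f₁ - f₂ = 0 := by rw [hu, hu0, zero_comp]; rfl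
      exact sub_eq_zero.mp hzero
    · intro v
      have hv3 : v ≫ h' = 0 := leftOrth_apply hX (hAshift a ha 1) _
      obtain ⟨u, hu⟩ := Triangle.coyoneda_exact₃ _ hT v hv3
      exact ⟨u, hu.symm⟩
  -- Part (ii) : full and faithful
  have hmapbij : ∀ (X₁ X₂ : ObjectProperty.FullSubcategory (· ∈ leftOrth A)),
      Function.Bijective (fun f : X₁ ⟶ X₂ =>
        (ObjectProperty.ι (· ∈ leftOrth A) ⋙ p).map f) := by
    intro X₁ X₂
    have key : ∀ u : X₁.obj ⟶ X₂.obj,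
        (adj.homEquiv X₁.obj (p.obj X₂.obj)) (p.map u) = u ≫ adj.unit.app X₂.obj := by
      intro u
      rw [Adjunction.homEquiv_unit]
      exact (adj.unit.naturality u).symm
    constructor
    · intro f g hfg
      have hfg' : p.map f.hom = p.map g.hom := hfg
      have h2 := (key f.hom).symm.trans
        ((congrArg (adj.homEquiv X₁.obj (p.obj X₂.obj)) hfg').trans (key g.hom))
      exact InducedCategory.hom_ext ((precomp_bij X₁.obj X₁.property X₂.obj).injective h2)
    · intro u
      obtain ⟨f, hf⟩ := (precomp_bij X₁.obj X₁.property X₂.obj).surjective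
        ((adj.homEquiv X₁.obj (p.obj X₂.obj)) u)
      refine ⟨ObjectProperty.homMk f, ?_⟩
      apply (adj.homEquiv X₁.obj (p.obj X₂.obj)).injective
      exact (key f).trans hf
  have hFaithful : (ObjectProperty.ι (· ∈ leftOrth A) ⋙ p).Faithful :=
    { map_injective := fun {X₁ X₂} => (hmapbij X₁ X₂).injective }
  have hFull : (ObjectProperty.ι (· ∈ leftOrth A) ⋙ p).Full :=
    { map_surjective := fun {X₁ X₂} => (hmapbij X₁ X₂).surjective }
  -- Part (ii) : essential surjectivity
  have hEssSurj : (ObjectProperty.ι (· ∈ leftOrth A) ⋙ p).EssSurj := by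
    constructor
    intro Y
    obtain ⟨ℓ, ⟨adjL⟩⟩ := hA.2.1.exists_leftAdjoint
    obtain ⟨X, m, h', hX, hT⟩ := fiber_mem (adjL.unit.app Y.obj) A hAshift (unit_bij adjL Y.obj)
    have hφ := (adj.homEquiv X Y).apply_symm_apply
      (show X ⟶ (ObjectProperty.ι (· ∈ rightOrth A)).obj Y from m)
    set φ := (adj.homEquiv X Y).symm
      (show X ⟶ (ObjectProperty.ι (· ∈ rightOrth A)).obj Y from m) with hφdef
    have mbij : ∀ (t : C), t ∈ rightOrth A →
        Function.Bijective (fun u : Y.obj ⟶ t => m ≫ u) := by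
      intro t ht
      constructor
      · intro u₁ u₂ h12
        have hsub : m ≫ (u₁ - u₂) = 0 := by
          rw [Preadditive.comp_sub]
          rw [show m ≫ u₁ = m ≫ u₂ from h12, sub_self]
        obtain ⟨g, hg⟩ := Triangle.yoneda_exact₂ _ hT (u₁ - u₂) hsub
        have hg0 : g = 0 := rightOrth_apply ht (ℓ.obj Y.obj).property g
        have hzero : u₁ - u₂ = 0 := hg.trans (by rw [hg0, comp_zero]; rfl)
        exact sub_eq_zero.mp hzero
      · intro v
        have h2 := inv_rot_of_distTriang _ hT
        have hzero1 : (Triangle.mk m (adjL.unit.app Y.obj) h').invRotate.mor₁ ≫ v = 0 :=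
          rightOrth_apply ht (hAshift _ (ℓ.obj Y.obj).property (-1)) _
        obtain ⟨u, hu⟩ := Triangle.yoneda_exact₂ _ h2 v hzero1
        exact ⟨u, hu.symm⟩
    have hcomp : ∀ (t : ObjectProperty.FullSubcategory (· ∈ rightOrth A)) (u : Y ⟶ t),
        (adj.homEquiv X t) (φ ≫ u) = m ≫ u.hom := by
      intro t u
      rw [Adjunction.homEquiv_naturality_right, hφ]
      rfl
    have hbijφ : ∀ (t : ObjectProperty.FullSubcategory (· ∈ rightOrth A)),
        Function.Bijective (fun u : Y ⟶ t => φ ≫ u) := by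
      intro t
      have heq : (fun u : Y ⟶ t => φ ≫ u)
          = (adj.homEquiv X t).symm ∘ (fun u : Y.obj ⟶ t.obj => m ≫ u) ∘ (fun u : Y ⟶ t => u.hom) := by
        funext u
        exact (Equiv.eq_symm_apply _).2 (hcomp t u)
      rw [heq]
      exact (adj.homEquiv X t).symm.bijective.comp ((mbij t.obj t.property).comp
        ⟨fun _ _ h => InducedCategory.hom_ext h, fun v => ⟨ObjectProperty.homMk v, rfl⟩⟩)
    obtain ⟨ψ, hψ⟩ := (hbijφ (p.obj X)).surjective (𝟙 (p.obj X))
    have hψ' : φ ≫ ψ = 𝟙 (p.obj X) := hψ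
    have hψφ : ψ ≫ φ = 𝟙 Y := by
      apply (hbijφ Y).injective
      show φ ≫ ψ ≫ φ = φ ≫ 𝟙 Y
      rw [← assoc, hψ', id_comp, comp_id]
    have : IsIso φ := ⟨ψ, hψ', hψφ⟩
    exact ⟨⟨X, hX⟩, ⟨asIso φ⟩⟩
  refine ⟨part1, { faithful := hFaithful, full := hFull, essSurj := hEssSurj }, ?_⟩
  -- Part (iii)
  exact ⟨(Functor.associator _ _ _).symm
    ≪≫ Functor.isoWhiskerRight (asIso adj.counit) (ObjectProperty.ι (· ∈ rightOrth A))
    ≪≫ Functor.leftUnitor _⟩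

end Statements
end HPD
end
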